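/- arXiv:2206.10174 — 3 statements merged into one kernel-verified Lean document; each statement's English description precedes it below -/
import Mathlib

section
/- Suppose all weights are equal to 1 (W_{kl} = 1 for all l > k) and 0 < μ ≤ γ ≤ 2μ. Fix (i,j) and a vector Θ⋆_ij ∈ ℝ^K with at least one nonzero entry. Then for every row index u ∈ S_B^c, the ℓ₁-norm bound ‖B_{u:} (B_{S_B:}ᵀ B_{S_B:})⁻¹ B_{S_B:}ᵀ‖₁ ≤ 4 holds; equivalently, ‖B_{S_B^c:} B_{S_B:}^†‖_∞ ≤ 4, so that the compatibility constant satisfies κ_IC ≤ 5. -/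
open scoped Classical
open Matrix

/-- The Moore–Penrose pseudoinverse of a real matrix, characterized by the four Penrose
conditions (which determine it uniquely; it always exists for real matrices). -/
noncomputable def moorePenrose {m n : Type*} [Fintype m] [Fintype n]
    (B : Matrix m n ℝ) : Matrix n m ℝ :=
  if h : ∃ X : Matrix n m ℝ,
      B * X * B = B ∧ X * B * X = X ∧ (B * X)ᵀ = B * X ∧ (X * B)ᵀ = X * B then
    h.choose
  else 0

/-- The matrix `B = [(γ/μ)GA ; I_K]` for `q = 1`. -/
noncomputable def Bmat (K : ℕ) (W : Fin K → Fin K → ℝ) (γ μ : ℝ) :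
    Matrix ({p : Fin K × Fin K // p.1 < p.2} ⊕ Fin K) (Fin K) ℝ :=
  Matrix.of fun r c =>
    match r with
    | Sum.inl p => γ / μ * (W p.val.1 p.val.2 *
        (if c = p.val.1 then 1 else if c = p.val.2 then -1 else 0))
    | Sum.inr k => if c = k then 1 else 0

/-- The support `S_B` of `BΘ⋆`. -/
noncomputable def suppB (K : ℕ) (W : Fin K → Fin K → ℝ) (γ μ : ℝ) (Θ : Fin K → ℝ) :
    Finset ({p : Fin K × Fin K // p.1 < p.2} ⊕ Fin K) :=
  Finset.univ.filter fun r => ((Bmat K W γ μ) *ᵥ Θ) r ≠ 0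

/-- The submatrix `B_{S_B:}` of rows of `B` indexed by `S_B`. -/
noncomputable def BmatS (K : ℕ) (W : Fin K → Fin K → ℝ) (γ μ : ℝ) (Θ : Fin K → ℝ) :
    Matrix {x // x ∈ suppB K W γ μ Θ} (Fin K) ℝ :=
  (Bmat K W γ μ).submatrix Subtype.val id

/-- The sign vector `sign((BΘ⋆)_{S_B})`. -/
noncomputable def signBS (K : ℕ) (W : Fin K → Fin K → ℝ) (γ μ : ℝ) (Θ : Fin K → ℝ) :
    {x // x ∈ suppB K W γ μ Θ} → ℝ :=
  fun r => Real.sign (((Bmat K W γ μ) *ᵥ Θ) r.val)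


section SumHelpers

lemma sum_split_k {K : ℕ} (k : Fin K) (G : Fin K → ℝ) :
    ((∑ j, if j < k then G j else 0) + ∑ j, if k < j then G j else 0) = (∑ j, G j) - G k := by
  rw [← Finset.sum_add_distrib]
  have h : ∀ j : Fin K,
      ((if j < k then G j else 0) + if k < j then G j else 0)
        = G j - (if j = k then G j else 0) := by
    intro j
    rcases lt_trichotomy j k with h | h | h
    · simp [h, h.ne, (lt_asymm h)]
    · simp [h]
    · simp [h, h.ne', (lt_asymm h)]
  simp_rw [h, Finset.sum_sub_distrib, Finset.sum_ite_eq' Finset.univ k G, Finset.mem_univ,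
    if_pos]

lemma H1 {K : ℕ} (k : Fin K) (G : Fin K → ℝ) :
    (∑ a : Fin K, ∑ b : Fin K,
      if a < b then ((if a = k then G b else 0) + (if b = k then G a else 0)) else 0)
      = (∑ j, G j) - G k := by
  have e1 : ∀ a b : Fin K,
      (if a < b then ((if a = k then G b else 0) + (if b = k then G a else 0)) else 0)
      = (if a = k then (if a < b then G b else 0) else 0)
        + (if b = k then (if a < b then G a else 0) else 0) := by
    intro a b; split_ifs <;> simp
  simp_rw [e1, Finset.sum_add_distrib]
  have e0 : ∀ a : Fin K, (∑ b : Fin K, (if a = k then (if a < b then G b else 0) else 0))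
      = (if a = k then (∑ b : Fin K, if a < b then G b else 0) else 0) := by
    intro a; split_ifs <;> simp
  simp_rw [e0]
  rw [Finset.sum_ite_eq' Finset.univ k (fun a => ∑ b, if a < b then G b else 0)]
  have e2 : ∀ b : Fin K, (∑ a : Fin K, (if b = k then (if a < b then G a else 0) else 0))
      = (if b = k then (∑ a : Fin K, if a < b then G a else 0) else 0) := by
    intro b; split_ifs <;> simp
  rw [Finset.sum_comm]
  simp_rw [e2]
  rw [Finset.sum_ite_eq' Finset.univ k (fun b => ∑ a : Fin K, if a < b then G a else 0)]
  simp only [Finset.mem_univ, if_pos]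
  rw [add_comm]
  exact sum_split_k k G

lemma sum_indicator_card {K : ℕ} (P : Fin K → Prop) (E : ℝ) :
    (∑ i, if P i then E else 0) = ((Finset.univ.filter P).card : ℝ) * E := by
  rw [Finset.sum_ite, Finset.sum_const, Finset.sum_const_zero, add_zero, nsmul_eq_mul]

end SumHelpers

section Aux
variable {K : ℕ} {W : Fin K → Fin K → ℝ} {γ μ : ℝ} {Θ : Fin K → ℝ}

lemma indsum {x y : Fin K} (hxy : x ≠ y) (v : Fin K → ℝ) :
    (∑ j, (if j = x then (1:ℝ) else if j = y then -1 else 0) * v j) = v x - v y := by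
  have h : ∀ j : Fin K, (if j = x then (1:ℝ) else if j = y then -1 else 0) * v j
      = (if j = x then v j else 0) + (if j = y then -(v j) else 0) := by
    intro j
    by_cases h1 : j = x
    · subst h1; simp [hxy]
    · by_cases h2 : j = y <;> simp [h1, h2, Ne.symm hxy]
  simp_rw [h, Finset.sum_add_distrib, Finset.sum_ite_eq' Finset.univ x v,
    Finset.sum_ite_eq' Finset.univ y (fun j => -(v j)), Finset.mem_univ, if_pos]
  ring

lemma ind_eq {x y j : Fin K} (h : x ≠ y) :
    (if j = x then (1:ℝ) else if j = y then -1 else 0)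
      = (if j = x then 1 else 0) - (if j = y then 1 else 0) := by
  by_cases h1 : j = x
  · subst h1; simp [h]
  · by_cases h2 : j = y <;> simp [h1, h2, Ne.symm h]

lemma rowdot_inl (hWone : ∀ k l : Fin K, k < l → W k l = 1)
    (p : {p : Fin K × Fin K // p.1 < p.2}) (v : Fin K → ℝ) :
    (∑ j, Bmat K W γ μ (Sum.inl p) j * v j) = γ / μ * (v p.val.1 - v p.val.2) := by
  simp only [Bmat, Matrix.of_apply, hWone _ _ p.2, one_mul, mul_assoc]
  rw [← Finset.mul_sum]
  rw [indsum (ne_of_lt p.2) v]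

lemma rowdot_inr (a : Fin K) (v : Fin K → ℝ) :
    (∑ j, Bmat K W γ μ (Sum.inr a) j * v j) = v a := by
  simp only [Bmat, Matrix.of_apply, ite_mul, one_mul, zero_mul]
  rw [Finset.sum_ite_eq' Finset.univ a v]
  simp

lemma Bmat_inl_apply (hWone : ∀ k l : Fin K, k < l → W k l = 1)
    (p : {p : Fin K × Fin K // p.1 < p.2}) (j : Fin K) :
    Bmat K W γ μ (Sum.inl p) j
      = γ / μ * ((if j = p.val.1 then 1 else 0) - (if j = p.val.2 then 1 else 0)) := by
  simp only [Bmat, Matrix.of_apply, hWone _ _ p.2, one_mul]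
  rw [ind_eq (ne_of_lt p.2)]

lemma Bmat_inr_apply (a : Fin K) (j : Fin K) :
    Bmat K W γ μ (Sum.inr a) j = if j = a then 1 else 0 := rfl

lemma mulVec_inl (hWone : ∀ k l : Fin K, k < l → W k l = 1)
    (p : {p : Fin K × Fin K // p.1 < p.2}) :
    ((Bmat K W γ μ) *ᵥ Θ) (Sum.inl p) = γ / μ * (Θ p.val.1 - Θ p.val.2) := by
  simpa [Matrix.mulVec, dotProduct] using rowdot_inl (γ := γ) (μ := μ) hWone p Θ

lemma mulVec_inr (k : Fin K) : ((Bmat K W γ μ) *ᵥ Θ) (Sum.inr k) = Θ k := by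
  simpa [Matrix.mulVec, dotProduct] using rowdot_inr (W := W) (γ := γ) (μ := μ) k Θ

lemma mem_suppB_inl (hWone : ∀ k l : Fin K, k < l → W k l = 1)
    (hc : γ / μ ≠ 0) (p : {p : Fin K × Fin K // p.1 < p.2}) :
    (Sum.inl p ∈ suppB K W γ μ Θ) ↔ Θ p.val.1 ≠ Θ p.val.2 := by
  simp only [suppB, Finset.mem_filter, Finset.mem_univ, true_and, mulVec_inl hWone]
  rw [mul_ne_zero_iff, sub_ne_zero]
  simp [hc]

lemma mem_suppB_inr (k : Fin K) : (Sum.inr k ∈ suppB K W γ μ Θ) ↔ Θ k ≠ 0 := by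
  simp only [suppB, Finset.mem_filter, Finset.mem_univ, true_and, mulVec_inr]

lemma sumS (hWone : ∀ k l : Fin K, k < l → W k l = 1) (hc : γ / μ ≠ 0)
    (F : ({p : Fin K × Fin K // p.1 < p.2} ⊕ Fin K) → ℝ) (g : Fin K → Fin K → ℝ)
    (hg : ∀ p : {p : Fin K × Fin K // p.1 < p.2}, F (Sum.inl p) = g p.val.1 p.val.2) :
    (∑ s : {x // x ∈ suppB K W γ μ Θ}, F s.val)
      = (∑ a : Fin K, ∑ b : Fin K, if a < b then (if Θ a ≠ Θ b then g a b else 0) else 0)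
        + ∑ k : Fin K, if Θ k ≠ 0 then F (Sum.inr k) else 0 := by
  rw [Finset.sum_coe_sort (suppB K W γ μ Θ) F]
  have h1 : ∑ i ∈ suppB K W γ μ Θ, F i
      = ∑ i : ({p : Fin K × Fin K // p.1 < p.2} ⊕ Fin K),
          if i ∈ suppB K W γ μ Θ then F i else 0 := by
    rw [Finset.sum_ite_mem, Finset.univ_inter]
  rw [h1, Fintype.sum_sum_type]
  congr 1
  · have h2 : ∀ p : {p : Fin K × Fin K // p.1 < p.2},
        (if Sum.inl p ∈ suppB K W γ μ Θ then F (Sum.inl p) else 0)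
          = (if Θ p.val.1 ≠ Θ p.val.2 then g p.val.1 p.val.2 else 0) := by
      intro p; rw [hg p]
      by_cases h : Θ p.val.1 ≠ Θ p.val.2
      · rw [if_pos ((mem_suppB_inl hWone hc p).2 h), if_pos h]
      · rw [if_neg (fun hm => h ((mem_suppB_inl hWone hc p).1 hm)), if_neg h]
    simp_rw [h2]
    rw [← Finset.sum_subtype (Finset.univ.filter fun p : Fin K × Fin K => p.1 < p.2)
      (by intro x; simp) (fun p : Fin K × Fin K => if Θ p.1 ≠ Θ p.2 then g p.1 p.2 else 0)]
    rw [Finset.sum_filter, Fintype.sum_prod_type]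
  · refine Finset.sum_congr rfl fun k _ => ?_
    by_cases h : Θ k ≠ 0
    · rw [if_pos ((mem_suppB_inr k).2 h), if_pos h]
    · rw [if_neg (fun hm => h ((mem_suppB_inr k).1 hm)), if_neg h]

lemma BmatS_mulVec (w : Fin K → ℝ) (s : {x // x ∈ suppB K W γ μ Θ}) :
    ((BmatS K W γ μ Θ) *ᵥ w) s = ∑ j, Bmat K W γ μ s.val j * w j := by
  simp [BmatS, Matrix.mulVec, dotProduct]

lemma M_mulVec (w : Fin K → ℝ) (j : Fin K) :
    (((BmatS K W γ μ Θ)ᵀ * BmatS K W γ μ Θ) *ᵥ w) j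
      = ∑ s : {x // x ∈ suppB K W γ μ Θ},
          Bmat K W γ μ s.val j * (((BmatS K W γ μ Θ) *ᵥ w) s) := by
  rw [← Matrix.mulVec_mulVec]
  simp [Matrix.mulVec, dotProduct, BmatS]

lemma vecMul_BmatST (w : Fin K → ℝ) (s : {x // x ∈ suppB K W γ μ Θ}) :
    (w ᵥ* (BmatS K W γ μ Θ)ᵀ) s = ∑ j, Bmat K W γ μ s.val j * w j := by
  simp [BmatS, Matrix.vecMul, dotProduct, mul_comm]

end Aux

section CaseInr
variable {K : ℕ} {W : Fin K → Fin K → ℝ} {γ μ : ℝ} {Θ : Fin K → ℝ}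

noncomputable def Nreal (K : ℕ) (Θ : Fin K → ℝ) : ℝ :=
  ((Finset.univ.filter fun i => Θ i ≠ 0).card : ℝ)

noncomputable def winr (K : ℕ) (γ μ : ℝ) (Θ : Fin K → ℝ) (k : Fin K) : Fin K → ℝ :=
  fun j => (γ/μ * (γ/μ) * Nreal K Θ)⁻¹ * ((if j = k then 1 else 0) + γ/μ * (γ/μ))

lemma Nreal_pos (hΘ : ∃ k, Θ k ≠ 0) : 0 < Nreal K Θ := by
  obtain ⟨k0, hk0⟩ := hΘ
  have h : k0 ∈ Finset.univ.filter fun i => Θ i ≠ 0 := by simp [hk0]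
  show (0:ℝ) < ((Finset.univ.filter fun i => Θ i ≠ 0).card : ℝ)
  exact_mod_cast Finset.card_pos.2 ⟨k0, h⟩

lemma filter_ne_eq (k : Fin K) (hk : Θ k = 0) :
    (Finset.univ.filter fun i => Θ k ≠ Θ i) = Finset.univ.filter fun i => Θ i ≠ 0 := by
  apply Finset.filter_congr
  intro i _
  rw [hk]
  exact ne_comm

set_option maxHeartbeats 2000000 in
lemma eigen_inr (hWone : ∀ k l : Fin K, k < l → W k l = 1) (hc0 : 0 < γ/μ)
    (hΘ : ∃ k0, Θ k0 ≠ 0) (k : Fin K) (hk : Θ k = 0) :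
    ((BmatS K W γ μ Θ)ᵀ * BmatS K W γ μ Θ) *ᵥ (winr K γ μ Θ k)
      = Bmat K W γ μ (Sum.inr k) := by
  have hcne : γ/μ ≠ 0 := ne_of_gt hc0
  have hN : 0 < Nreal K Θ := Nreal_pos hΘ
  have hNne : Nreal K Θ ≠ 0 := ne_of_gt hN
  funext j
  rw [M_mulVec]
  simp_rw [BmatS_mulVec]
  set c : ℝ := γ/μ with hcdef
  set N : ℝ := Nreal K Θ with hNdef
  set w : Fin K → ℝ := winr K γ μ Θ k with hwdef
  have hwab : ∀ a b : Fin K, w a - w b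
      = (c*c*N)⁻¹ * ((if a = k then 1 else 0) - (if b = k then 1 else 0)) := by
    intro a b; simp only [hwdef, winr, ← hcdef, ← hNdef]; ring
  set E : ℝ := c * c * (c*c*N)⁻¹ with hEdef
  set G : Fin K → ℝ := fun i =>
    if Θ j ≠ Θ i then E * ((if j = k then 1 else 0) - (if i = k then 1 else 0)) else 0
    with hGdef
  rw [sumS hWone hcne (fun i => Bmat K W γ μ i j * ∑ j', Bmat K W γ μ i j' * w j')
      (fun a b => (c * ((if j = a then (1:ℝ) else 0) - (if j = b then 1 else 0)))
        * (c * (w a - w b)))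
      (fun p => by
        show Bmat K W γ μ (Sum.inl p) j * (∑ j', Bmat K W γ μ (Sum.inl p) j' * w j')
          = (c * ((if j = p.val.1 then (1:ℝ) else 0) - (if j = p.val.2 then 1 else 0)))
            * (c * (w p.val.1 - w p.val.2))
        rw [rowdot_inl hWone p w, Bmat_inl_apply hWone p j])]
  have hpt : ∀ a b : Fin K,
      (if a < b then (if Θ a ≠ Θ b then
          (c * ((if j = a then (1:ℝ) else 0) - (if j = b then 1 else 0)))
            * (c * (w a - w b)) else 0) else 0)
      = (if a < b then ((if a = j then G b else 0) + (if b = j then G a else 0)) else 0) := by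
    intro a b
    by_cases hab : a < b
    · simp only [if_pos hab]
      have hne : a ≠ b := ne_of_lt hab
      rw [hwab a b]
      simp only [hGdef]
      by_cases haj : a = j
      · subst haj
        have hbj : ¬ (b = a) := Ne.symm hne
        have hab' : ¬ (a = b) := hne
        simp only [eq_self_iff_true, if_true, if_neg hbj, if_neg hab', add_zero]
        by_cases hT : Θ a ≠ Θ b
        · simp only [if_pos hT, eq_self_iff_true, if_true]; ring
        · simp only [if_neg hT, eq_self_iff_true, if_true]
      · by_cases hbj : b = j
        · subst hbj
          have h1 : ¬ (b = a) := Ne.symm hne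
          simp only [if_neg haj, eq_self_iff_true, if_true, if_neg h1, zero_add]
          by_cases hT : Θ a ≠ Θ b
          · simp only [if_pos hT, if_pos (Ne.symm hT), eq_self_iff_true, if_true]; ring
          · simp only [if_neg hT, if_neg (fun h => hT (Ne.symm h)), eq_self_iff_true, if_true]
        · have h1 : ¬ (j = a) := fun h => haj h.symm
          have h2 : ¬ (j = b) := fun h => hbj h.symm
          simp only [if_neg h1, if_neg h2, if_neg haj, if_neg hbj, add_zero]
          by_cases hT : Θ a ≠ Θ b
          · simp only [if_pos hT]; ring
          · simp only [if_neg hT]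

    · simp [hab]
  have hsum1 : (∑ a : Fin K, ∑ b : Fin K, if a < b then (if Θ a ≠ Θ b then
          (c * ((if j = a then (1:ℝ) else 0) - (if j = b then 1 else 0)))
            * (c * (w a - w b)) else 0) else 0)
      = (∑ i, G i) - G j := by
    rw [← H1 j G]
    exact Finset.sum_congr rfl fun a _ => Finset.sum_congr rfl fun b _ => hpt a b
  rw [hsum1]
  have hGj : G j = 0 := by
    simp only [hGdef]
    simp
  have hGsum : (∑ i, G i)
      = (if j = k then ((Finset.univ.filter fun i => Θ j ≠ Θ i).card : ℝ) * E else 0)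
        - (if Θ j ≠ Θ k then E else 0) := by
    have hGs : ∀ i : Fin K, G i
        = (if j = k then (if Θ j ≠ Θ i then E else 0) else 0)
          - (if i = k then (if Θ j ≠ Θ i then E else 0) else 0) := by
      intro i; simp only [hGdef]; split_ifs <;> ring
    simp_rw [hGs]
    rw [Finset.sum_sub_distrib]
    congr 1
    · split_ifs with h
      · rw [Finset.sum_ite, Finset.sum_const, Finset.sum_const_zero, add_zero, nsmul_eq_mul]
      · simp
    · rw [Finset.sum_ite_eq' Finset.univ k (fun i => if Θ j ≠ Θ i then E else 0)]
      simp
  rw [hGj, hGsum, sub_zero]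
  have hinr : (∑ i : Fin K, if Θ i ≠ 0 then
        Bmat K W γ μ (Sum.inr i) j * ∑ j', Bmat K W γ μ (Sum.inr i) j' * w j' else 0)
      = (if Θ j ≠ 0 then w j else 0) := by
    have hpt2 : ∀ i : Fin K, (if Θ i ≠ 0 then
          Bmat K W γ μ (Sum.inr i) j * ∑ j', Bmat K W γ μ (Sum.inr i) j' * w j' else 0)
        = (if i = j then (if Θ j ≠ 0 then w j else 0) else 0) := by
      intro i
      rw [rowdot_inr i w, Bmat_inr_apply]
      by_cases hij : i = j
      · subst hij; simp
      · have h' : ¬ (j = i) := fun h => hij h.symm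
        simp [hij, h']
    simp_rw [hpt2]
    rw [Finset.sum_ite_eq' Finset.univ j (fun _ => if Θ j ≠ 0 then w j else 0)]
    simp
  rw [hinr, Bmat_inr_apply]
  by_cases hjk : j = k
  · subst hjk
    have e1 : ¬ (Θ j ≠ Θ j) := by simp
    have e2 : ¬ (Θ j ≠ 0) := by simp [hk]
    rw [if_pos rfl, if_pos rfl, if_neg e1, if_neg e2, sub_zero, add_zero, filter_ne_eq j hk]
    have hcard : ((Finset.univ.filter fun i => Θ i ≠ 0).card : ℝ) = N := rfl
    rw [hcard, hEdef]
    field_simp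
  · rw [if_neg hjk, if_neg hjk, zero_sub, hk]
    by_cases hΘj : Θ j ≠ 0
    · rw [if_pos hΘj, if_pos hΘj]
      have hwj : w j = E := by
        simp only [hwdef, winr, ← hcdef, ← hNdef, if_neg hjk, hEdef]; ring
      rw [hwj]; ring
    · rw [if_neg hΘj, if_neg hΘj]; ring

set_option maxHeartbeats 2000000 in
lemma bound_inr (hWone : ∀ k l : Fin K, k < l → W k l = 1) (hc0 : 0 < γ/μ)
    (hc1 : 1 ≤ γ/μ) (hΘ : ∃ k0, Θ k0 ≠ 0) (k : Fin K) (hk : Θ k = 0) :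
    (∑ s : {x // x ∈ suppB K W γ μ Θ}, |((winr K γ μ Θ k) ᵥ* (BmatS K W γ μ Θ)ᵀ) s|) ≤ 4 := by
  have hcne : γ/μ ≠ 0 := ne_of_gt hc0
  have hN : 0 < Nreal K Θ := Nreal_pos hΘ
  have hNne : Nreal K Θ ≠ 0 := ne_of_gt hN
  simp_rw [vecMul_BmatST]
  set c : ℝ := γ/μ with hcdef
  set N : ℝ := Nreal K Θ with hNdef
  set w : Fin K → ℝ := winr K γ μ Θ k with hwdef
  have hwab : ∀ a b : Fin K, w a - w b
      = (c*c*N)⁻¹ * ((if a = k then 1 else 0) - (if b = k then 1 else 0)) := by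
    intro a b; simp only [hwdef, winr, ← hcdef, ← hNdef]; ring
  have hXpos : (0:ℝ) < (c*c*N)⁻¹ := inv_pos.2 (by positivity)
  set G : Fin K → ℝ := fun i => if Θ k ≠ Θ i then c * (c*c*N)⁻¹ else 0 with hGdef
  rw [sumS hWone hcne (fun i => |∑ j, Bmat K W γ μ i j * w j|)
      (fun a b => |c * (w a - w b)|)
      (fun p => by
        show |∑ j, Bmat K W γ μ (Sum.inl p) j * w j| = |c * (w p.val.1 - w p.val.2)|
        rw [rowdot_inl hWone p w])]
  have hpt : ∀ a b : Fin K,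
      (if a < b then (if Θ a ≠ Θ b then |c * (w a - w b)| else 0) else 0)
      = (if a < b then ((if a = k then G b else 0) + (if b = k then G a else 0)) else 0) := by
    intro a b
    by_cases hab : a < b
    · simp only [if_pos hab]
      have hne : a ≠ b := ne_of_lt hab
      rw [hwab a b]
      simp only [hGdef]
      by_cases hak : a = k
      · subst hak
        have hbk : ¬ (b = a) := Ne.symm hne
        simp only [eq_self_iff_true, if_true, if_neg hbk, add_zero]
        by_cases hT : Θ a ≠ Θ b
        · simp only [if_pos hT, eq_self_iff_true, if_true, if_neg hbk]
          rw [show c * ((c*c*N)⁻¹ * ((1:ℝ) - 0)) = c * (c*c*N)⁻¹ by ring]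
          exact abs_of_nonneg (le_of_lt (mul_pos hc0 hXpos))
        · simp only [if_neg hT]
      · by_cases hbk : b = k
        · subst hbk
          have h1 : ¬ (b = a) := Ne.symm hne
          simp only [if_neg hak, eq_self_iff_true, if_true, zero_add]
          by_cases hT : Θ a ≠ Θ b
          · simp only [if_pos hT, if_pos (Ne.symm hT), if_neg hak, eq_self_iff_true, if_true]
            rw [show c * ((c*c*N)⁻¹ * ((0:ℝ) - 1)) = -(c * (c*c*N)⁻¹) by ring, abs_neg]
            exact abs_of_nonneg (le_of_lt (mul_pos hc0 hXpos))
          · simp only [if_neg hT, if_neg (fun h => hT (Ne.symm h))]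
        · simp only [if_neg hak, if_neg hbk, add_zero]
          by_cases hT : Θ a ≠ Θ b
          · simp only [if_pos hT]
            rw [show c * ((c*c*N)⁻¹ * ((0:ℝ) - 0)) = 0 by ring]
            exact abs_zero
          · simp only [if_neg hT]
    · simp [hab]
  have hsum1 : (∑ a : Fin K, ∑ b : Fin K,
        if a < b then (if Θ a ≠ Θ b then |c * (w a - w b)| else 0) else 0)
      = (∑ i, G i) - G k := by
    rw [← H1 k G]
    exact Finset.sum_congr rfl fun a _ => Finset.sum_congr rfl fun b _ => hpt a b
  rw [hsum1]
  have hGk : G k = 0 := by simp only [hGdef]; simp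
  have hGsum : (∑ i, G i) = N * (c * (c*c*N)⁻¹) := by
    simp only [hGdef]
    rw [Finset.sum_ite, Finset.sum_const, Finset.sum_const_zero, add_zero, nsmul_eq_mul,
      filter_ne_eq k hk]
    rfl
  have hinr : (∑ i : Fin K, if Θ i ≠ 0 then |∑ j, Bmat K W γ μ (Sum.inr i) j * w j| else 0)
      = N * (c * c * (c*c*N)⁻¹) := by
    have hpt2 : ∀ i : Fin K, (if Θ i ≠ 0 then |∑ j, Bmat K W γ μ (Sum.inr i) j * w j| else 0)
        = (if Θ i ≠ 0 then c * c * (c*c*N)⁻¹ else 0) := by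
      intro i
      rw [rowdot_inr i w]
      by_cases hT : Θ i ≠ 0
      · have hik : ¬ (i = k) := fun h => hT (by rw [h]; exact hk)
        simp only [if_pos hT, hwdef, winr, ← hcdef, ← hNdef, if_neg hik]
        rw [show (c*c*N)⁻¹ * ((0:ℝ) + c*c) = c*c*(c*c*N)⁻¹ by ring]
        exact abs_of_nonneg (le_of_lt (mul_pos (mul_pos hc0 hc0) hXpos))
      · simp [hT]
    simp_rw [hpt2]
    rw [Finset.sum_ite, Finset.sum_const, Finset.sum_const_zero, add_zero, nsmul_eq_mul]
    rfl
  rw [hGk, hGsum, hinr, sub_zero]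
  have h1 : N * (c * (c*c*N)⁻¹) = c⁻¹ := by field_simp
  have h2 : N * (c * c * (c*c*N)⁻¹) = 1 := by field_simp
  rw [h1, h2]
  have h3 : c⁻¹ ≤ 1 := inv_le_one_of_one_le₀ hc1
  linarith

noncomputable def dreal (K : ℕ) (Θ : Fin K → ℝ) (k : Fin K) : ℝ :=
  ((Finset.univ.filter fun i => Θ k ≠ Θ i).card : ℝ)

noncomputable def Dval (K : ℕ) (γ μ : ℝ) (Θ : Fin K → ℝ) (k : Fin K) : ℝ :=
  (γ/μ)*(γ/μ)*dreal K Θ k + (if Θ k ≠ 0 then 1 else 0)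

noncomputable def winl (K : ℕ) (γ μ : ℝ) (Θ : Fin K → ℝ) (k l : Fin K) : Fin K → ℝ :=
  fun j => (γ/μ / Dval K γ μ Θ k) * ((if j = k then 1 else 0) - (if j = l then 1 else 0))

lemma dreal_nonneg (k : Fin K) : 0 ≤ dreal K Θ k := Nat.cast_nonneg _

lemma Dval_pos (hc0 : 0 < γ/μ) (hΘ : ∃ k0, Θ k0 ≠ 0) (k : Fin K) :
    0 < Dval K γ μ Θ k := by
  by_cases h : Θ k ≠ 0
  · rw [Dval, if_pos h]
    have h1 : 0 ≤ (γ/μ)*(γ/μ)*dreal K Θ k :=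
      mul_nonneg (mul_nonneg hc0.le hc0.le) (dreal_nonneg k)
    linarith
  · push_neg at h
    rw [Dval, if_neg (fun hh => hh h), add_zero]
    have h1 : dreal K Θ k = Nreal K Θ := by
      rw [dreal, Nreal, filter_ne_eq k h]
    rw [h1]
    exact mul_pos (mul_pos hc0 hc0) (Nreal_pos hΘ)

lemma inr_sum_eval (w : Fin K → ℝ) (j : Fin K) :
    (∑ i : Fin K, if Θ i ≠ 0 then
        Bmat K W γ μ (Sum.inr i) j * ∑ j', Bmat K W γ μ (Sum.inr i) j' * w j' else 0)
      = (if Θ j ≠ 0 then w j else 0) := by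
  have hpt2 : ∀ i : Fin K, (if Θ i ≠ 0 then
        Bmat K W γ μ (Sum.inr i) j * ∑ j', Bmat K W γ μ (Sum.inr i) j' * w j' else 0)
      = (if i = j then (if Θ j ≠ 0 then w j else 0) else 0) := by
    intro i
    rw [rowdot_inr i w, Bmat_inr_apply]
    by_cases hij : i = j
    · subst hij; simp
    · have h' : ¬ (j = i) := fun h => hij h.symm
      simp [hij, h']
  simp_rw [hpt2]
  rw [Finset.sum_ite_eq' Finset.univ j (fun _ => if Θ j ≠ 0 then w j else 0)]
  simp

set_option maxHeartbeats 4000000 in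
lemma eigen_inl (hWone : ∀ k l : Fin K, k < l → W k l = 1) (hc0 : 0 < γ/μ)
    (hΘ : ∃ k0, Θ k0 ≠ 0) (q : {p : Fin K × Fin K // p.1 < p.2})
    (hq : Θ q.val.1 = Θ q.val.2) :
    ((BmatS K W γ μ Θ)ᵀ * BmatS K W γ μ Θ) *ᵥ (winl K γ μ Θ q.val.1 q.val.2)
      = Bmat K W γ μ (Sum.inl q) := by
  have hcne : γ/μ ≠ 0 := ne_of_gt hc0
  obtain ⟨⟨k, l⟩, hkl⟩ := q
  have hkl' : k < l := hkl
  have hq' : Θ k = Θ l := hq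
  have hne : k ≠ l := ne_of_lt hkl'
  have hD : 0 < Dval K γ μ Θ k := Dval_pos hc0 hΘ k
  have hDne : Dval K γ μ Θ k ≠ 0 := ne_of_gt hD
  funext j
  rw [M_mulVec]
  simp_rw [BmatS_mulVec]
  set c : ℝ := γ/μ with hcdef
  set Dv : ℝ := Dval K γ μ Θ k with hDdef
  set w : Fin K → ℝ := winl K γ μ Θ k l with hwdef
  have hwx : ∀ x : Fin K, w x
      = (c/Dv) * ((if x = k then 1 else 0) - (if x = l then 1 else 0)) := by
    intro x; simp only [hwdef, winl, ← hcdef, ← hDdef]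
  have hwab : ∀ a b : Fin K, w a - w b
      = (c/Dv) * (((if a = k then (1:ℝ) else 0) - (if a = l then 1 else 0))
          - ((if b = k then 1 else 0) - (if b = l then 1 else 0))) := by
    intro a b; rw [hwx a, hwx b]; ring
  set C : ℝ := c * c * (c/Dv) with hCdef
  set G : Fin K → ℝ := fun i =>
    if Θ j ≠ Θ i then C * (((if j = k then (1:ℝ) else 0) - (if j = l then 1 else 0))
        - ((if i = k then 1 else 0) - (if i = l then 1 else 0))) else 0
    with hGdef
  rw [sumS hWone hcne (fun i => Bmat K W γ μ i j * ∑ j', Bmat K W γ μ i j' * w j')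
      (fun a b => (c * ((if j = a then (1:ℝ) else 0) - (if j = b then 1 else 0)))
        * (c * (w a - w b)))
      (fun p => by
        show Bmat K W γ μ (Sum.inl p) j * (∑ j', Bmat K W γ μ (Sum.inl p) j' * w j')
          = (c * ((if j = p.val.1 then (1:ℝ) else 0) - (if j = p.val.2 then 1 else 0)))
            * (c * (w p.val.1 - w p.val.2))
        rw [rowdot_inl hWone p w, Bmat_inl_apply hWone p j])]
  have hpt : ∀ a b : Fin K,
      (if a < b then (if Θ a ≠ Θ b then
          (c * ((if j = a then (1:ℝ) else 0) - (if j = b then 1 else 0)))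
            * (c * (w a - w b)) else 0) else 0)
      = (if a < b then ((if a = j then G b else 0) + (if b = j then G a else 0)) else 0) := by
    intro a b
    by_cases hab : a < b
    · simp only [if_pos hab]
      have hab' : a ≠ b := ne_of_lt hab
      rw [hwab a b]
      simp only [hGdef]
      by_cases haj : a = j
      · subst haj
        have hbj : ¬ (b = a) := Ne.symm hab'
        simp only [eq_self_iff_true, if_true, if_neg hbj, if_neg hab', add_zero]
        by_cases hT : Θ a ≠ Θ b
        · simp only [if_pos hT, eq_self_iff_true, if_true]; ring
        · simp only [if_neg hT]
      · by_cases hbj : b = j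
        · subst hbj
          have h1 : ¬ (b = a) := Ne.symm hab'
          simp only [if_neg haj, eq_self_iff_true, if_true, if_neg h1, zero_add]
          by_cases hT : Θ a ≠ Θ b
          · simp only [if_pos hT, if_pos (Ne.symm hT), eq_self_iff_true, if_true]; ring
          · simp only [if_neg hT, if_neg (fun h => hT (Ne.symm h)), eq_self_iff_true, if_true]
        · have h1 : ¬ (j = a) := fun h => haj h.symm
          have h2 : ¬ (j = b) := fun h => hbj h.symm
          simp only [if_neg h1, if_neg h2, if_neg haj, if_neg hbj, add_zero]
          by_cases hT : Θ a ≠ Θ b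
          · simp only [if_pos hT]; ring
          · simp only [if_neg hT]
    · simp [hab]
  have hsum1 : (∑ a : Fin K, ∑ b : Fin K, if a < b then (if Θ a ≠ Θ b then
          (c * ((if j = a then (1:ℝ) else 0) - (if j = b then 1 else 0)))
            * (c * (w a - w b)) else 0) else 0)
      = (∑ i, G i) - G j := by
    rw [← H1 j G]
    exact Finset.sum_congr rfl fun a _ => Finset.sum_congr rfl fun b _ => hpt a b
  rw [hsum1]
  have hGj : G j = 0 := by simp only [hGdef]; simp
  have hGsum : (∑ i, G i)
      = dreal K Θ j * (C * ((if j = k then (1:ℝ) else 0) - (if j = l then 1 else 0)))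
        - (if Θ j ≠ Θ k then C else 0) + (if Θ j ≠ Θ l then C else 0) := by
    have hGs : ∀ i : Fin K, G i
        = ((if Θ j ≠ Θ i then C * ((if j = k then (1:ℝ) else 0) - (if j = l then 1 else 0))
            else 0)
          - (if i = k then (if Θ j ≠ Θ i then C else 0) else 0))
          + (if i = l then (if Θ j ≠ Θ i then C else 0) else 0) := by
      intro i; simp only [hGdef]; split_ifs <;> ring
    simp_rw [hGs]
    rw [Finset.sum_add_distrib, Finset.sum_sub_distrib]
    congr 1
    congr 1
    · rw [Finset.sum_ite, Finset.sum_const, Finset.sum_const_zero, add_zero, nsmul_eq_mul]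
      rfl
    · rw [Finset.sum_ite_eq' Finset.univ k
        (fun i => if Θ j ≠ Θ i then C else 0)]
      simp
    · rw [Finset.sum_ite_eq' Finset.univ l
        (fun i => if Θ j ≠ Θ i then C else 0)]
      simp
  rw [hGsum, inr_sum_eval, Bmat_inl_apply hWone]
  show _ = c * ((if j = k then (1:ℝ) else 0) - (if j = l then 1 else 0))
  rw [hq']
  have hcancel : ∀ X Y Z : ℝ, X - Y + Y + Z = X + Z := by intro X Y Z; ring
  rw [hGj, sub_zero, hcancel]
  have hDval : c*c*dreal K Θ k + (if Θ k ≠ 0 then 1 else 0) = Dv := by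
    rw [hDdef, Dval, ← hcdef]
  by_cases hjk : j = k
  · subst hjk
    have hjl : ¬ (j = l) := fun h => hne (h ▸ rfl)
    simp only [eq_self_iff_true, if_true, if_neg hjl, hwx j, ← hq']
    have hdj : dreal K Θ j = dreal K Θ j := rfl
    by_cases hδ : Θ j ≠ 0
    · rw [if_pos hδ]
      have h5 : c*c*dreal K Θ j + 1 = Dv := by rw [← hDval, if_pos hδ]
      have hgoal : dreal K Θ j * (C * ((1:ℝ) - 0))
            + (c/Dv) * ((1:ℝ) - 0) = (c * (c*c*dreal K Θ j + 1))/Dv := by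
        rw [hCdef]; ring
      rw [hgoal, h5, mul_div_assoc, div_self hDne, mul_one]
      ring
    · rw [if_neg hδ]
      have h5 : c*c*dreal K Θ j = Dv := by
        rw [← hDval, if_neg hδ, add_zero]
      have hgoal : dreal K Θ j * (C * ((1:ℝ) - 0)) + 0
          = (c * (c*c*dreal K Θ j))/Dv := by
        rw [hCdef]; ring
      rw [hgoal, h5, mul_div_assoc, div_self hDne, mul_one]
      ring
  · by_cases hjl : j = l
    · subst hjl
      have hjk' : ¬ (j = k) := hjk
      have hdjl : dreal K Θ j = dreal K Θ k := by
        have hfil : (Finset.univ.filter fun i => Θ j ≠ Θ i)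
            = (Finset.univ.filter fun i => Θ k ≠ Θ i) :=
          Finset.filter_congr (fun i _ => by rw [← hq'])
        rw [dreal, dreal, hfil]
      simp only [if_neg hjk', eq_self_iff_true, if_true, hwx j, ← hq', hdjl]
      by_cases hδ : Θ k ≠ 0
      · rw [if_pos hδ]
        have h5 : c*c*dreal K Θ k + 1 = Dv := by rw [← hDval, if_pos hδ]
        have hgoal : dreal K Θ k * (C * ((0:ℝ) - 1))
              + (c/Dv) * ((0:ℝ) - 1) = (c * (c*c*dreal K Θ k + 1)) * (-1)/Dv := by
          rw [hCdef]; ring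
        rw [hgoal, h5]
        field_simp
        norm_num
      · rw [if_neg hδ]
        have h5 : c*c*dreal K Θ k = Dv := by rw [← hDval, if_neg hδ, add_zero]
        have hgoal : dreal K Θ k * (C * ((0:ℝ) - 1)) + 0
            = (c * (c*c*dreal K Θ k)) * (-1)/Dv := by
          rw [hCdef]; ring
        rw [hgoal, h5]
        field_simp
        norm_num
    · simp only [if_neg hjk, if_neg hjl, hwx j]
      by_cases hT : Θ j ≠ 0
      · rw [if_pos hT]; ring
      · rw [if_neg hT]; ring


set_option maxHeartbeats 4000000 in
lemma bound_inl (hWone : ∀ k l : Fin K, k < l → W k l = 1) (hc0 : 0 < γ/μ)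
    (hc2 : γ/μ ≤ 2) (hΘ : ∃ k0, Θ k0 ≠ 0) (q : {p : Fin K × Fin K // p.1 < p.2})
    (hq : Θ q.val.1 = Θ q.val.2) :
    (∑ s : {x // x ∈ suppB K W γ μ Θ},
      |((winl K γ μ Θ q.val.1 q.val.2) ᵥ* (BmatS K W γ μ Θ)ᵀ) s|) ≤ 4 := by
  have hcne : γ/μ ≠ 0 := ne_of_gt hc0
  obtain ⟨⟨k, l⟩, hkl⟩ := q
  have hkl' : k < l := hkl
  have hq' : Θ k = Θ l := hq
  have hne : k ≠ l := ne_of_lt hkl'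
  have hD : 0 < Dval K γ μ Θ k := Dval_pos hc0 hΘ k
  have hDne : Dval K γ μ Θ k ≠ 0 := ne_of_gt hD
  simp_rw [vecMul_BmatST]
  set c : ℝ := γ/μ with hcdef
  set Dv : ℝ := Dval K γ μ Θ k with hDdef
  set w : Fin K → ℝ := winl K γ μ Θ k l with hwdef
  have hwx : ∀ x : Fin K, w x
      = (c/Dv) * ((if x = k then 1 else 0) - (if x = l then 1 else 0)) := by
    intro x; simp only [hwdef, winl, ← hcdef, ← hDdef]
  have hwab : ∀ a b : Fin K, w a - w b
      = (c/Dv) * (((if a = k then (1:ℝ) else 0) - (if a = l then 1 else 0))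
          - ((if b = k then 1 else 0) - (if b = l then 1 else 0))) := by
    intro a b; rw [hwx a, hwx b]; ring
  have hCC : 0 < c * (c/Dv) := mul_pos hc0 (div_pos hc0 hD)
  have hcD : 0 < c/Dv := div_pos hc0 hD
  have habs : ∀ x : ℝ, |c * (c/Dv * x)| = (c * (c/Dv)) * |x| := by
    intro x
    rw [show c * (c/Dv * x) = (c * (c/Dv)) * x by ring, abs_mul, abs_of_pos hCC]
  have habs2 : ∀ x : ℝ, |c/Dv * x| = (c/Dv) * |x| := by
    intro x
    rw [abs_mul, abs_of_pos hcD]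
  set Gk : Fin K → ℝ := fun i => if Θ k ≠ Θ i then c * (c/Dv) else 0 with hGkdef
  set Gl : Fin K → ℝ := fun i => if Θ l ≠ Θ i then c * (c/Dv) else 0 with hGldef
  rw [sumS hWone hcne (fun i => |∑ j, Bmat K W γ μ i j * w j|)
      (fun a b => |c * (w a - w b)|)
      (fun p => by
        show |∑ j, Bmat K W γ μ (Sum.inl p) j * w j| = |c * (w p.val.1 - w p.val.2)|
        rw [rowdot_inl hWone p w])]
  have hpt : ∀ a b : Fin K,
      (if a < b then (if Θ a ≠ Θ b then |c * (w a - w b)| else 0) else 0)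
      = (if a < b then ((if a = k then Gk b else 0) + (if b = k then Gk a else 0)) else 0)
        + (if a < b then ((if a = l then Gl b else 0) + (if b = l then Gl a else 0)) else 0) := by
    intro a b
    by_cases hab : a < b
    · simp only [if_pos hab]
      have hab' : a ≠ b := ne_of_lt hab
      rw [hwab a b]
      simp only [hGkdef, hGldef]
      by_cases hak : a = k
      · subst hak
        have hbk : ¬ (b = a) := Ne.symm hab'
        by_cases hbl : b = l
        · subst hbl
          have hg1 : ¬ (Θ a ≠ Θ b) := fun h => h hq'
          have hg2 : ¬ (Θ b ≠ Θ a) := fun h => h hq'.symm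
          simp only [eq_self_iff_true, if_true, if_neg hbk, if_neg hne, if_neg hg1,
            if_neg hg2, if_neg (Ne.symm hne)]
          norm_num
        · simp only [eq_self_iff_true, if_true, if_neg hbk, if_neg hbl, if_neg hne,
            add_zero, zero_add]
          by_cases hT : Θ a ≠ Θ b
          · simp only [if_pos hT, habs]
            norm_num
          · simp only [if_neg hT]
      · by_cases hal : a = l
        · subst hal
          have hbk : ¬ (b = k) := by
            intro h
            have : a < k := h ▸ hab
            exact absurd hkl' (not_lt.mpr this.le)
          have hbl : ¬ (b = a) := Ne.symm hab'
          simp only [if_neg hak, if_neg hbk, eq_self_iff_true, if_true, if_neg hbl,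
            if_neg (Ne.symm hne), add_zero, zero_add]
          by_cases hT : Θ a ≠ Θ b
          · simp only [if_pos hT, habs]
            norm_num
          · simp only [if_neg hT]
        · by_cases hbk : b = k
          · subst hbk
            have hal' : ¬ (a = l) := hal
            simp only [if_neg hak, if_neg hal', eq_self_iff_true, if_true,
              if_neg (fun h : b = l => hne h), add_zero, zero_add]
            by_cases hT : Θ a ≠ Θ b
            · simp only [if_pos hT, if_pos (Ne.symm hT), habs]
              norm_num
            · simp only [if_neg hT, if_neg (fun h => hT (Ne.symm h))]
          · by_cases hbl : b = l
            · subst hbl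
              simp only [if_neg hak, if_neg hal, if_neg hbk, eq_self_iff_true, if_true,
                add_zero, zero_add]
              by_cases hT : Θ a ≠ Θ b
              · simp only [if_pos hT, if_pos (Ne.symm hT), habs]
                norm_num
              · simp only [if_neg hT, if_neg (fun h => hT (Ne.symm h))]
            · simp only [if_neg hak, if_neg hal, if_neg hbk, if_neg hbl, add_zero]
              by_cases hT : Θ a ≠ Θ b
              · simp only [if_pos hT, habs]
                norm_num
              · simp only [if_neg hT]
    · simp [hab]
  have hsplit : (∑ a : Fin K, ∑ b : Fin K,
        if a < b then (if Θ a ≠ Θ b then |c * (w a - w b)| else 0) else 0)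
      = ((∑ i, Gk i) - Gk k) + ((∑ i, Gl i) - Gl l) := by
    rw [← H1 k Gk, ← H1 l Gl, ← Finset.sum_add_distrib]
    simp_rw [← Finset.sum_add_distrib]
    exact Finset.sum_congr rfl fun a _ => Finset.sum_congr rfl fun b _ => hpt a b
  rw [hsplit]
  have hGkk : Gk k = 0 := by simp only [hGkdef]; simp
  have hGll : Gl l = 0 := by simp only [hGldef]; simp
  have hGksum : (∑ i, Gk i) = dreal K Θ k * (c * (c/Dv)) := by
    simp only [hGkdef]
    rw [Finset.sum_ite, Finset.sum_const, Finset.sum_const_zero, add_zero, nsmul_eq_mul]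
    rfl
  have hGlsum : (∑ i, Gl i) = dreal K Θ k * (c * (c/Dv)) := by
    simp only [hGldef]
    rw [Finset.sum_ite, Finset.sum_const, Finset.sum_const_zero, add_zero, nsmul_eq_mul]
    have hfil : (Finset.univ.filter fun i => Θ l ≠ Θ i)
        = (Finset.univ.filter fun i => Θ k ≠ Θ i) :=
      Finset.filter_congr (fun i _ => by rw [hq'])
    rw [hfil]
    rfl
  have hinr : (∑ i : Fin K, if Θ i ≠ 0 then |∑ j, Bmat K W γ μ (Sum.inr i) j * w j| else 0)
      = (if Θ k ≠ 0 then c/Dv else 0) + (if Θ k ≠ 0 then c/Dv else 0) := by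
    have hpt2 : ∀ i : Fin K, (if Θ i ≠ 0 then |∑ j, Bmat K W γ μ (Sum.inr i) j * w j| else 0)
        = (if i = k then (if Θ k ≠ 0 then c/Dv else 0) else 0)
          + (if i = l then (if Θ l ≠ 0 then c/Dv else 0) else 0) := by
      intro i
      rw [rowdot_inr i w, hwx i]
      by_cases hik : i = k
      · subst hik
        simp only [eq_self_iff_true, if_true, if_neg hne, add_zero]
        by_cases hT : Θ i ≠ 0
        · simp only [if_pos hT, habs2]
          norm_num
        · simp only [if_neg hT]
      · by_cases hil : i = l
        · subst hil
          simp only [if_neg hik, eq_self_iff_true, if_true, zero_add]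
          by_cases hT : Θ i ≠ 0
          · simp only [if_pos hT, habs2]
            norm_num
          · simp only [if_neg hT]
        · simp only [if_neg hik, if_neg hil, add_zero]
          by_cases hT : Θ i ≠ 0
          · simp only [if_pos hT, habs2]
            norm_num
          · simp only [if_neg hT]
    simp_rw [hpt2]
    rw [Finset.sum_add_distrib,
      Finset.sum_ite_eq' Finset.univ k (fun _ => if Θ k ≠ 0 then c/Dv else 0),
      Finset.sum_ite_eq' Finset.univ l (fun _ => if Θ l ≠ 0 then c/Dv else 0)]
    simp only [Finset.mem_univ, if_pos]
    rw [← hq']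
  rw [hGkk, hGll, hGksum, hGlsum, hinr, sub_zero]
  have hDval : c*c*dreal K Θ k + (if Θ k ≠ 0 then 1 else 0) = Dv := by
    rw [hDdef, Dval, ← hcdef]
  have hd0 : (0:ℝ) ≤ dreal K Θ k := dreal_nonneg k
  by_cases hδ : Θ k ≠ 0
  · rw [if_pos hδ]
    have h5 : c*c*dreal K Θ k + 1 = Dv := by rw [← hDval, if_pos hδ]
    have e : dreal K Θ k * (c * (c/Dv)) + dreal K Θ k * (c * (c/Dv)) + (c/Dv + c/Dv)
        = (2*(c*c*dreal K Θ k) + 2*c)/Dv := by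
      field_simp
      ring
    rw [e, div_le_iff₀ hD, ← h5]
    have hX : (0:ℝ) ≤ c*c*dreal K Θ k := mul_nonneg (mul_nonneg hc0.le hc0.le) hd0
    nlinarith
  · rw [if_neg hδ]
    push_neg at hδ
    have h5 : c*c*dreal K Θ k = Dv := by
      rw [← hDval, if_neg (fun h => h hδ), add_zero]
    have hdN : dreal K Θ k = Nreal K Θ := by
      rw [dreal, Nreal, filter_ne_eq k hδ]
    have hdpos : 0 < dreal K Θ k := by rw [hdN]; exact Nreal_pos hΘ
    have e : dreal K Θ k * (c * (c/Dv)) + dreal K Θ k * (c * (c/Dv)) + (0 + 0)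
        = 2 * (c * c * dreal K Θ k) / Dv := by
      field_simp
      ring
    rw [e, ← h5, mul_div_assoc, div_self (by rw [h5]; exact hDne), mul_one]
    norm_num

lemma penrose_unique {m n : Type*} [Fintype m] [Fintype n]
    (B : Matrix m n ℝ) (X Y : Matrix n m ℝ)
    (hX1 : B * X * B = B) (hX2 : X * B * X = X) (hX3 : (B * X)ᵀ = B * X) (hX4 : (X * B)ᵀ = X * B)
    (hY1 : B * Y * B = B) (hY2 : Y * B * Y = Y) (hY3 : (B * Y)ᵀ = B * Y) (hY4 : (Y * B)ᵀ = Y * B) :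
    X = Y := by
  have hBX : B * X = B * Y := by
    calc B * X = (B * X)ᵀ := hX3.symm
    _ = Xᵀ * Bᵀ := by rw [Matrix.transpose_mul]
    _ = Xᵀ * (B * Y * B)ᵀ := by rw [hY1]
    _ = Xᵀ * (Bᵀ * (B*Y)ᵀ) := by rw [Matrix.transpose_mul]
    _ = Xᵀ * (Bᵀ * (B*Y)) := by rw [hY3]
    _ = (Xᵀ * Bᵀ) * (B*Y) := (Matrix.mul_assoc _ _ _).symm
    _ = (B*X)ᵀ * (B*Y) := by rw [Matrix.transpose_mul]
    _ = (B*X) * (B*Y) := by rw [hX3]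
    _ = ((B*X)*B) * Y := (Matrix.mul_assoc _ _ _).symm
    _ = B * Y := by rw [hX1]
  have hXB : X * B = Y * B := by
    calc X * B = (X * B)ᵀ := hX4.symm
    _ = Bᵀ * Xᵀ := by rw [Matrix.transpose_mul]
    _ = (B*(Y*B))ᵀ * Xᵀ := by rw [← Matrix.mul_assoc, hY1]
    _ = ((Y*B)ᵀ * Bᵀ) * Xᵀ := by rw [Matrix.transpose_mul]
    _ = ((Y*B) * Bᵀ) * Xᵀ := by rw [hY4]
    _ = (Y*B) * (Bᵀ * Xᵀ) := Matrix.mul_assoc _ _ _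
    _ = (Y*B) * (X*B)ᵀ := by rw [Matrix.transpose_mul]
    _ = (Y*B) * (X*B) := by rw [hX4]
    _ = Y * (B * (X*B)) := Matrix.mul_assoc _ _ _
    _ = Y * (B*X*B) := by rw [Matrix.mul_assoc]
    _ = Y * B := by rw [hX1]
  calc X = X * B * X := hX2.symm
  _ = Y * B * X := by rw [hXB]
  _ = Y * (B * X) := Matrix.mul_assoc _ _ _
  _ = Y * (B * Y) := by rw [hBX]
  _ = Y * B * Y := (Matrix.mul_assoc _ _ _).symm
  _ = Y := hY2

lemma moorePenrose_eq {m n : Type*} [Fintype m] [Fintype n] [DecidableEq n]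
    (B : Matrix m n ℝ) (hdet : IsUnit (Bᵀ * B).det) :
    moorePenrose B = (Bᵀ * B)⁻¹ * Bᵀ := by
  set X : Matrix n m ℝ := (Bᵀ * B)⁻¹ * Bᵀ with hXdef
  have hXB : X * B = 1 := by
    rw [hXdef, Matrix.mul_assoc, Matrix.nonsing_inv_mul _ hdet]
  have h1 : B * X * B = B := by rw [Matrix.mul_assoc, hXB, Matrix.mul_one]
  have h2 : X * B * X = X := by rw [hXB, Matrix.one_mul]
  have h4 : (X * B)ᵀ = X * B := by rw [hXB]; exact Matrix.transpose_one
  have hsym : ((Bᵀ*B)⁻¹)ᵀ = (Bᵀ*B)⁻¹ := by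
    rw [Matrix.transpose_nonsing_inv, Matrix.transpose_mul, Matrix.transpose_transpose]
  have h3 : (B * X)ᵀ = B * X := by
    calc (B * X)ᵀ = Xᵀ * Bᵀ := Matrix.transpose_mul _ _
    _ = (Bᵀᵀ * ((Bᵀ*B)⁻¹)ᵀ) * Bᵀ := by rw [hXdef, Matrix.transpose_mul]
    _ = (B * (Bᵀ*B)⁻¹) * Bᵀ := by rw [Matrix.transpose_transpose, hsym]
    _ = B * ((Bᵀ*B)⁻¹ * Bᵀ) := Matrix.mul_assoc _ _ _
    _ = B * X := by rw [hXdef]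
  have hex : ∃ Y : Matrix n m ℝ,
      B * Y * B = B ∧ Y * B * Y = Y ∧ (B * Y)ᵀ = B * Y ∧ (Y * B)ᵀ = Y * B :=
    ⟨X, h1, h2, h3, h4⟩
  rw [moorePenrose, dif_pos hex]
  obtain ⟨g1, g2, g3, g4⟩ := hex.choose_spec
  exact penrose_unique B _ X g1 g2 g3 g4 h1 h2 h3 h4

section Glue
variable {K : ℕ} {W : Fin K → Fin K → ℝ} {γ μ : ℝ} {Θ : Fin K → ℝ}

lemma BmatS_inj (hWone : ∀ k l : Fin K, k < l → W k l = 1) (hc0 : 0 < γ/μ)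
    (hΘ : ∃ k0, Θ k0 ≠ 0) :
    ∀ v : Fin K → ℝ, (BmatS K W γ μ Θ) *ᵥ v = 0 → v = 0 := by
  have hcne : γ/μ ≠ 0 := ne_of_gt hc0
  intro v hv
  have hz : ∀ i : Fin K, Θ i ≠ 0 → v i = 0 := by
    intro i hi
    have hmem : Sum.inr i ∈ suppB K W γ μ Θ := (mem_suppB_inr i).2 hi
    have h := congrFun hv ⟨Sum.inr i, hmem⟩
    rw [BmatS_mulVec, rowdot_inr] at h
    exact h
  funext j
  by_cases hj : Θ j ≠ 0
  · exact hz j hj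
  · push_neg at hj
    obtain ⟨k0, hk0⟩ := hΘ
    have hvk0 : v k0 = 0 := hz k0 hk0
    have hne : j ≠ k0 := fun h => hk0 (h ▸ hj)
    have hTne : Θ j ≠ Θ k0 := by rw [hj]; exact fun hh => hk0 hh.symm
    rcases lt_or_gt_of_ne hne with h | h
    · have hmem : Sum.inl (⟨(j, k0), h⟩ : {p : Fin K × Fin K // p.1 < p.2})
          ∈ suppB K W γ μ Θ := (mem_suppB_inl hWone hcne _).2 hTne
      have h2 := congrFun hv ⟨_, hmem⟩
      rw [BmatS_mulVec, rowdot_inl hWone] at h2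
      have h3 : v j - v k0 = 0 := by
        rcases mul_eq_zero.mp h2 with h4 | h4
        · exact absurd h4 hcne
        · exact h4
      rw [hvk0, sub_zero] at h3
      exact h3
    · have hmem : Sum.inl (⟨(k0, j), h⟩ : {p : Fin K × Fin K // p.1 < p.2})
          ∈ suppB K W γ μ Θ := (mem_suppB_inl hWone hcne _).2 (Ne.symm hTne)
      have h2 := congrFun hv ⟨_, hmem⟩
      rw [BmatS_mulVec, rowdot_inl hWone] at h2
      have h3 : v k0 - v j = 0 := by
        rcases mul_eq_zero.mp h2 with h4 | h4
        · exact absurd h4 hcne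
        · exact h4
      rw [hvk0, zero_sub, neg_eq_zero] at h3
      exact h3

lemma Mdet_isUnit (hWone : ∀ k l : Fin K, k < l → W k l = 1) (hc0 : 0 < γ/μ)
    (hΘ : ∃ k0, Θ k0 ≠ 0) :
    IsUnit ((BmatS K W γ μ Θ)ᵀ * BmatS K W γ μ Θ).det := by
  have hpd : ((BmatS K W γ μ Θ)ᵀ * BmatS K W γ μ Θ).PosDef := by
    refine Matrix.PosDef.of_dotProduct_mulVec_pos ?_ ?_
    · rw [← Matrix.conjTranspose_eq_transpose_of_trivial]
      exact Matrix.isHermitian_conjTranspose_mul_self _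
    · intro x hx
      have hBx : (BmatS K W γ μ Θ) *ᵥ x ≠ 0 :=
        fun h => hx (BmatS_inj hWone hc0 hΘ x h)
      have hsx : star x = x := by
        funext i; simp
      rw [hsx, ← Matrix.mulVec_mulVec, Matrix.dotProduct_mulVec, Matrix.vecMul_transpose]
      obtain ⟨s0, hs0⟩ : ∃ s0, (BmatS K W γ μ Θ *ᵥ x) s0 ≠ 0 := by
        by_contra hcon
        push_neg at hcon
        exact hBx (funext hcon)
      refine Finset.sum_pos' (fun s _ => mul_self_nonneg _) ⟨s0, Finset.mem_univ s0, ?_⟩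
      exact mul_self_pos.2 hs0
  exact hpd.det_pos.ne'.isUnit

lemma Minv_rowvec (hdet : IsUnit ((BmatS K W γ μ Θ)ᵀ * BmatS K W γ μ Θ).det)
    (w v : Fin K → ℝ)
    (h : ((BmatS K W γ μ Θ)ᵀ * BmatS K W γ μ Θ) *ᵥ w = v) :
    v ᵥ* ((BmatS K W γ μ Θ)ᵀ * BmatS K W γ μ Θ)⁻¹ = w := by
  set M := (BmatS K W γ μ Θ)ᵀ * BmatS K W γ μ Θ with hMdef
  have hsym : Mᵀ = M := by
    rw [hMdef, Matrix.transpose_mul, Matrix.transpose_transpose]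
  calc v ᵥ* M⁻¹ = v ᵥ* ((M⁻¹)ᵀ)ᵀ := by rw [Matrix.transpose_transpose]
  _ = (M⁻¹)ᵀ *ᵥ v := Matrix.vecMul_transpose _ _
  _ = (Mᵀ)⁻¹ *ᵥ v := by rw [Matrix.transpose_nonsing_inv]
  _ = M⁻¹ *ᵥ v := by rw [hsym]
  _ = M⁻¹ *ᵥ (M *ᵥ w) := by rw [h]
  _ = (M⁻¹ * M) *ᵥ w := Matrix.mulVec_mulVec _ _ _
  _ = (1 : Matrix (Fin K) (Fin K) ℝ) *ᵥ w := by rw [Matrix.nonsing_inv_mul _ hdet]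
  _ = w := Matrix.one_mulVec w

end Glue

/-- with all weights equal to 1 and `0 < μ ≤ γ ≤ 2μ`, for every row
`u ∈ S_B^c` we have `‖B_{u:}(B_{S_B:}ᵀB_{S_B:})⁻¹B_{S_B:}ᵀ‖₁ ≤ 4`; equivalently
`‖B_{S_B^c:}B_{S_B:}†‖_∞ ≤ 4`, so that the compatibility constant satisfies `κ_IC ≤ 5`. -/
theorem compatibility_constant_bound
    (K : ℕ) (W : Fin K → Fin K → ℝ)
    (hWone : ∀ k l : Fin K, k < l → W k l = 1)
    (μ γ : ℝ) (hμ : 0 < μ) (hμγ : μ ≤ γ) (hγμ : γ ≤ 2 * μ)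
    (Θ : Fin K → ℝ) (hΘ : ∃ k, Θ k ≠ 0) :
    (∀ u, u ∉ suppB K W γ μ Θ →
      ∑ s : {x // x ∈ suppB K W γ μ Θ},
        |(((Bmat K W γ μ u) ᵥ* ((BmatS K W γ μ Θ)ᵀ * BmatS K W γ μ Θ)⁻¹) ᵥ*
            (BmatS K W γ μ Θ)ᵀ) s| ≤ 4) ∧
    ((⨆ r : {r // r ∉ suppB K W γ μ Θ},
        ∑ s : {x // x ∈ suppB K W γ μ Θ},
          |((Bmat K W γ μ r.val) ᵥ* (moorePenrose (BmatS K W γ μ Θ))) s|) ≤ 4) ∧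
    ((⨆ r : {r // r ∉ suppB K W γ μ Θ},
        ∑ s : {x // x ∈ suppB K W γ μ Θ},
          |((Bmat K W γ μ r.val) ᵥ* (moorePenrose (BmatS K W γ μ Θ))) s|) + 1 ≤ 5) := by
  have hγ0 : 0 < γ := lt_of_lt_of_le hμ hμγ
  have hc0 : 0 < γ/μ := div_pos hγ0 hμ
  have hc1 : 1 ≤ γ/μ := (one_le_div hμ).2 hμγ
  have hc2 : γ/μ ≤ 2 := by rw [div_le_iff₀ hμ]; linarith
  have hdet := Mdet_isUnit hWone hc0 hΘ
  have key : ∀ u, u ∉ suppB K W γ μ Θ →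
      (∑ s : {x // x ∈ suppB K W γ μ Θ},
        |(((Bmat K W γ μ u) ᵥ* ((BmatS K W γ μ Θ)ᵀ * BmatS K W γ μ Θ)⁻¹) ᵥ*
            (BmatS K W γ μ Θ)ᵀ) s|) ≤ 4 := by
    intro u hu
    cases u with
    | inl q =>
      have hq : Θ q.val.1 = Θ q.val.2 := by
        by_contra hcon
        exact hu ((mem_suppB_inl hWone (ne_of_gt hc0) q).2 hcon)
      rw [Minv_rowvec hdet _ _ (eigen_inl hWone hc0 hΘ q hq)]
      exact bound_inl hWone hc0 hc2 hΘ q hq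
    | inr k =>
      have hk : Θ k = 0 := by
        by_contra hcon
        exact hu ((mem_suppB_inr k).2 hcon)
      rw [Minv_rowvec hdet _ _ (eigen_inr hWone hc0 hΘ k hk)]
      exact bound_inr hWone hc0 hc1 hΘ k hk
  have hmp : moorePenrose (BmatS K W γ μ Θ)
      = ((BmatS K W γ μ Θ)ᵀ * BmatS K W γ μ Θ)⁻¹ * (BmatS K W γ μ Θ)ᵀ :=
    moorePenrose_eq _ hdet
  have hsup : (⨆ r : {r // r ∉ suppB K W γ μ Θ},
      ∑ s : {x // x ∈ suppB K W γ μ Θ},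
        |((Bmat K W γ μ r.val) ᵥ* (moorePenrose (BmatS K W γ μ Θ))) s|) ≤ 4 := by
    apply Real.iSup_le
    · intro r
      rw [hmp]
      simp_rw [← Matrix.vecMul_vecMul]
      exact key r.val r.2
    · norm_num
  exact ⟨key, hsup, by linarith⟩
end CaseInr
end

section
/- Let M = I_K + γAᵀGᵀGA with q = 2 and γ ≥ 0, and let C be any matrix with CᵀC = M. Then for every nonempty subset S ⊆ {1,…,K}, the principal submatrix C_Sᵀ C_S = M_{SS} is invertible and its inverse satisfies the induced ∞-norm bound ‖(C_Sᵀ C_S)⁻¹‖_∞ ≤ 1 / min_{i∈S}{ 1 + γ·Σ_{j∈S^c, j≠i} W_{ij} } ≤ 1. -/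
open scoped Classical
open Matrix

/-- The pair-difference matrix `A`. -/
noncomputable def pairDiffMatrix (K : ℕ) :
    Matrix {p : Fin K × Fin K // p.1 < p.2} (Fin K) ℝ :=
  Matrix.of fun p m => if m = p.val.1 then 1 else if m = p.val.2 then -1 else 0

/-- The diagonal weight matrix `G` for `q = 2`, with diagonal entries `√(W_{kl})`. -/
noncomputable def weightDiagSqrt (K : ℕ) (W : Fin K → Fin K → ℝ) :
    Matrix {p : Fin K × Fin K // p.1 < p.2} {p : Fin K × Fin K // p.1 < p.2} ℝ :=
  Matrix.diagonal fun p => Real.sqrt (W p.val.1 p.val.2)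

section Varah

variable {n : Type*} [Fintype n] [DecidableEq n]

lemma varah_key (B : Matrix n n ℝ) (d : ℝ) (hd : 0 < d)
    (hdom : ∀ i, (∑ j ∈ Finset.univ.erase i, |B i j|) + d ≤ B i i)
    (y : n → ℝ) (i : n) (hmax : ∀ j, |y j| ≤ |y i|) :
    d * |y i| ≤ |(B.mulVec y) i| := by
  have hsplit : (B.mulVec y) i = B i i * y i + ∑ j ∈ Finset.univ.erase i, B i j * y j := by
    rw [Matrix.mulVec, dotProduct]
    exact (Finset.add_sum_erase _ _ (Finset.mem_univ i)).symm
  have hBii : 0 ≤ B i i := by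
    have := hdom i
    have h0 : 0 ≤ ∑ j ∈ Finset.univ.erase i, |B i j| := Finset.sum_nonneg fun j _ => abs_nonneg _
    linarith
  have h1 : |B i i * y i| - |∑ j ∈ Finset.univ.erase i, B i j * y j| ≤ |(B.mulVec y) i| := by
    rw [hsplit]
    set a := B i i * y i
    set b := ∑ j ∈ Finset.univ.erase i, B i j * y j
    have : |a| ≤ |a + b| + |b| := by
      calc |a| = |(a + b) + (-b)| := by ring_nf
        _ ≤ |a + b| + |(-b)| := abs_add_le _ _
        _ = |a + b| + |b| := by rw [abs_neg]
    linarith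
  have h2 : |∑ j ∈ Finset.univ.erase i, B i j * y j| ≤
      (∑ j ∈ Finset.univ.erase i, |B i j|) * |y i| := by
    calc |∑ j ∈ Finset.univ.erase i, B i j * y j|
        ≤ ∑ j ∈ Finset.univ.erase i, |B i j * y j| := Finset.abs_sum_le_sum_abs _ _
      _ ≤ ∑ j ∈ Finset.univ.erase i, |B i j| * |y i| := by
          refine Finset.sum_le_sum fun j _ => ?_
          rw [abs_mul]
          exact mul_le_mul_of_nonneg_left (hmax j) (abs_nonneg _)
      _ = (∑ j ∈ Finset.univ.erase i, |B i j|) * |y i| := by rw [Finset.sum_mul]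
  have h3 : |B i i * y i| = B i i * |y i| := by rw [abs_mul, abs_of_nonneg hBii]
  have h4 := hdom i
  nlinarith [abs_nonneg (y i)]

lemma varah_det_ne [Nonempty n] (B : Matrix n n ℝ) (d : ℝ) (hd : 0 < d)
    (hdom : ∀ i, (∑ j ∈ Finset.univ.erase i, |B i j|) + d ≤ B i i) :
    B.det ≠ 0 := by
  intro h
  obtain ⟨v, hv, hBv⟩ := (Matrix.exists_mulVec_eq_zero_iff).mpr h
  obtain ⟨i, hi⟩ := Finite.exists_max fun j => |v j|
  have := varah_key B d hd hdom v i hi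
  rw [hBv] at this
  simp only [Pi.zero_apply, abs_zero] at this
  have hvi : |v i| ≤ 0 := by nlinarith
  apply hv
  funext j
  have := (hi j).trans hvi
  simpa using abs_nonpos_iff.mp this

lemma varah_inv_bound [Nonempty n] (B : Matrix n n ℝ) (d : ℝ) (hd : 0 < d)
    (hdom : ∀ i, (∑ j ∈ Finset.univ.erase i, |B i j|) + d ≤ B i i) (s : n) :
    ∑ t, |B⁻¹ s t| ≤ 1 / d := by
  have hdet := varah_det_ne B d hd hdom
  set z : n → ℝ := fun t => if 0 ≤ B⁻¹ s t then 1 else -1 with hz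
  set y : n → ℝ := B⁻¹.mulVec z with hy
  have hBy : B.mulVec y = z := by
    rw [hy, Matrix.mulVec_mulVec, Matrix.mul_nonsing_inv _ (isUnit_iff_ne_zero.mpr hdet),
      Matrix.one_mulVec]
  have hys : y s = ∑ t, |B⁻¹ s t| := by
    rw [hy, Matrix.mulVec, dotProduct]
    refine Finset.sum_congr rfl fun t _ => ?_
    by_cases h : 0 ≤ B⁻¹ s t
    · simp [hz, h, abs_of_nonneg h]
    · simp [hz, h, abs_of_neg (lt_of_not_ge h)]
  obtain ⟨i, hi⟩ := Finite.exists_max fun j => |y j|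
  have hkey := varah_key B d hd hdom y i hi
  rw [hBy] at hkey
  have hzi : |z i| ≤ 1 := by
    by_cases h : 0 ≤ B⁻¹ s i <;> simp [hz, h]
  have hyi : |y i| ≤ 1 / d := by
    rw [le_div_iff₀ hd]
    nlinarith
  calc ∑ t, |B⁻¹ s t| = y s := hys.symm
    _ ≤ |y s| := le_abs_self _
    _ ≤ |y i| := hi s
    _ ≤ 1 / d := hyi

end Varah

lemma lap_entry (K : ℕ) (W : Fin K → Fin K → ℝ)
    (hWsymm : ∀ k l, W k l = W l k) (hWpos : ∀ k l, 0 ≤ W k l) (k l : Fin K) :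
    ((pairDiffMatrix K)ᵀ * (weightDiagSqrt K W)ᵀ * (weightDiagSqrt K W) *
        (pairDiffMatrix K)) k l =
      if k = l then ∑ j ∈ Finset.univ.erase k, W k j else -(W k l) := by
  have hsq : (fun p : {p : Fin K × Fin K // p.1 < p.2} =>
      Real.sqrt (W p.val.1 p.val.2) * Real.sqrt (W p.val.1 p.val.2)) =
      fun p => W p.val.1 p.val.2 :=
    funext fun p => Real.mul_self_sqrt (hWpos _ _)
  have hGG : (weightDiagSqrt K W)ᵀ * (weightDiagSqrt K W) =
      Matrix.diagonal (fun p : {p : Fin K × Fin K // p.1 < p.2} => W p.val.1 p.val.2) := by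
    rw [weightDiagSqrt, Matrix.diagonal_transpose, Matrix.diagonal_mul_diagonal, hsq]
  rw [Matrix.mul_assoc ((pairDiffMatrix K)ᵀ), hGG]
  have hentry : ((pairDiffMatrix K)ᵀ *
      (Matrix.diagonal (fun p : {p : Fin K × Fin K // p.1 < p.2} => W p.val.1 p.val.2)) *
      (pairDiffMatrix K)) k l =
      ∑ p : {p : Fin K × Fin K // p.1 < p.2},
        (fun q : Fin K × Fin K =>
          (if k = q.1 then (1:ℝ) else if k = q.2 then -1 else 0) * W q.1 q.2 *
          (if l = q.1 then (1:ℝ) else if l = q.2 then -1 else 0)) p.val := by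
    rw [Matrix.mul_apply]
    refine Finset.sum_congr rfl fun p _ => ?_
    rw [Matrix.mul_diagonal, Matrix.transpose_apply]
    simp only [pairDiffMatrix, Matrix.of_apply]
  rw [hentry, ← Finset.sum_subtype
      (Finset.univ.filter (fun p : Fin K × Fin K => p.1 < p.2)) (fun x => by simp)
      (fun q : Fin K × Fin K =>
        (if k = q.1 then (1:ℝ) else if k = q.2 then -1 else 0) * W q.1 q.2 *
        (if l = q.1 then (1:ℝ) else if l = q.2 then -1 else 0))]
  clear hsq hGG hentry
  by_cases hkl : k = l
  · subst hkl
    rw [if_pos rfl]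
    have hterm : ∀ p ∈ Finset.univ.filter (fun p : Fin K × Fin K => p.1 < p.2),
        ((if k = p.1 then (1:ℝ) else if k = p.2 then -1 else 0) * W p.1 p.2 *
         (if k = p.1 then (1:ℝ) else if k = p.2 then -1 else 0)) =
        (if k = p.1 ∨ k = p.2 then W p.1 p.2 else 0) := by
      intro p hp
      split_ifs with h1 h2 h3 h3 <;> simp_all <;> ring
    rw [Finset.sum_congr rfl hterm, Finset.sum_ite, Finset.sum_const_zero, add_zero]
    refine Finset.sum_nbij' (fun x : Fin K × Fin K => if k = x.1 then x.2 else x.1)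
      (fun j : Fin K => if j < k then (j, k) else (k, j)) ?_ ?_ ?_ ?_ ?_
    · intro a ha
      simp only [Finset.mem_filter, Finset.mem_univ, true_and] at ha
      obtain ⟨h1, h2⟩ := ha
      simp only [Finset.mem_erase, Finset.mem_univ, and_true]
      split_ifs with h <;>
        simp only [ne_eq, Fin.ext_iff, Fin.lt_def] at h h1 h2 ⊢ <;> omega
    · intro b hb
      simp only [Finset.mem_erase, Finset.mem_univ, and_true] at hb
      simp only [Finset.mem_filter, Finset.mem_univ, true_and]
      split_ifs with h
      · exact ⟨h, Or.inr rfl⟩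
      · exact ⟨lt_of_le_of_ne (not_lt.mp h) (Ne.symm hb), Or.inl rfl⟩
    · intro a ha
      simp only [Finset.mem_filter, Finset.mem_univ, true_and] at ha
      obtain ⟨h1, h2⟩ := ha
      by_cases h : k = a.1
      · rw [if_pos h]
        have hnlt : ¬ a.2 < k := by rw [h]; exact not_lt.mpr h1.le
        rw [if_neg hnlt]
        exact Prod.ext_iff.mpr ⟨h, rfl⟩
      · rw [if_neg h]
        have hk2 : k = a.2 := h2.resolve_left h
        have hlt : a.1 < k := by rw [hk2]; exact h1
        rw [if_pos hlt]
        exact Prod.ext_iff.mpr ⟨rfl, hk2⟩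
    · intro b hb
      simp only [Finset.mem_erase, Finset.mem_univ, and_true] at hb
      by_cases h : b < k
      · rw [if_pos h, if_neg (fun he : k = b => hb he.symm)]
      · rw [if_neg h, if_pos rfl]
    · intro a ha
      simp only [Finset.mem_filter, Finset.mem_univ, true_and] at ha
      by_cases h2 : k = a.1
      · rw [if_pos h2, ← h2]
      · rw [if_neg h2]
        rcases ha.2 with h | h
        · exact absurd h h2
        · rw [← h]
          exact hWsymm _ _
  · rw [if_neg hkl]
    rcases lt_or_gt_of_ne hkl with h | h
    · rw [Finset.sum_eq_single (k, l)]
      · simp [h.ne, hkl, Ne.symm hkl]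
      · intro p hp hne
        obtain ⟨p1, p2⟩ := p
        simp only [Finset.mem_filter, Finset.mem_univ, true_and] at hp
        split_ifs <;> try ring
        all_goals
          exfalso
          dsimp only at *
          simp only [ne_eq, Prod.mk.injEq, not_and, Fin.ext_iff, Fin.lt_def] at *
          omega
      · intro hnot
        exact absurd (by simp [h]) hnot
    · rw [Finset.sum_eq_single (l, k)]
      · simp [h, hkl, Ne.symm hkl, hWsymm k l]
      · intro p hp hne
        obtain ⟨p1, p2⟩ := p
        simp only [Finset.mem_filter, Finset.mem_univ, true_and] at hp
        split_ifs <;> try ring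
        all_goals
          exfalso
          dsimp only at *
          simp only [ne_eq, Prod.mk.injEq, not_and, Fin.ext_iff, Fin.lt_def] at *
          omega
      · intro hnot
        exact absurd (by simp [h]) hnot

/-- for `M = I + γAᵀGᵀGA` (q = 2, γ ≥ 0) and any `C` with `CᵀC = M`,
every nonempty principal submatrix `C_Sᵀ C_S = M_{SS}` is invertible and its inverse
satisfies `‖(C_SᵀC_S)⁻¹‖_∞ ≤ 1 / min_{i∈S}(1 + γ Σ_{j∈Sᶜ, j≠i} W_{ij}) ≤ 1`. -/
theorem inverse_infty_norm_bound
    (K : ℕ) (W : Fin K → Fin K → ℝ)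
    (hWsymm : ∀ k l, W k l = W l k) (hWpos : ∀ k l, 0 ≤ W k l)
    (γ : ℝ) (hγ0 : 0 ≤ γ)
    (m : Type) [Fintype m]
    (C : Matrix m (Fin K) ℝ)
    (hC : Cᵀ * C =
      1 + γ • ((pairDiffMatrix K)ᵀ * (weightDiagSqrt K W)ᵀ * (weightDiagSqrt K W) *
        (pairDiffMatrix K)))
    (S : Finset (Fin K)) (hS : S.Nonempty) :
    IsUnit ((C.submatrix id (Subtype.val : {x // x ∈ S} → Fin K))ᵀ *
        (C.submatrix id (Subtype.val : {x // x ∈ S} → Fin K))).det ∧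
    (∀ s : {x // x ∈ S},
      ∑ t : {x // x ∈ S},
        |(((C.submatrix id (Subtype.val : {x // x ∈ S} → Fin K))ᵀ *
            (C.submatrix id (Subtype.val : {x // x ∈ S} → Fin K)))⁻¹) s t| ≤
        1 / (⨅ i : {x // x ∈ S}, (1 + γ * ∑ j ∈ Sᶜ.erase i.val, W i.val j))) ∧
    1 / (⨅ i : {x // x ∈ S}, (1 + γ * ∑ j ∈ Sᶜ.erase i.val, W i.val j)) ≤ 1 := by
  haveI : Nonempty {x // x ∈ S} := ⟨⟨hS.choose, hS.choose_spec⟩⟩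
  set B := (C.submatrix id (Subtype.val : {x // x ∈ S} → Fin K))ᵀ *
      (C.submatrix id (Subtype.val : {x // x ∈ S} → Fin K)) with hBdef
  set d := ⨅ i : {x // x ∈ S}, (1 + γ * ∑ j ∈ Sᶜ.erase i.val, W i.val j) with hddef
  have hBentry : ∀ s t : {x // x ∈ S}, B s t = (Cᵀ * C) s.val t.val := by
    intro s t
    simp [hBdef, Matrix.mul_apply]
  have hM : ∀ a b : Fin K, (Cᵀ * C) a b =
      if a = b then 1 + γ * ∑ j ∈ Finset.univ.erase a, W a j else -(γ * W a b) := by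
    intro a b
    rw [hC, Matrix.add_apply, Matrix.smul_apply, lap_entry K W hWsymm hWpos a b]
    by_cases hab : a = b
    · subst hab
      simp [Matrix.one_apply, smul_eq_mul]
    · simp only [Matrix.one_apply, if_neg hab, smul_eq_mul, zero_add]
      ring
  have hd1 : (1:ℝ) ≤ d := by
    apply le_ciInf
    intro i
    have h0 : 0 ≤ γ * ∑ j ∈ Sᶜ.erase i.val, W i.val j :=
      mul_nonneg hγ0 (Finset.sum_nonneg fun j _ => hWpos _ _)
    linarith
  have hd0 : (0:ℝ) < d := lt_of_lt_of_le one_pos hd1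
  have hdom : ∀ s : {x // x ∈ S},
      (∑ t ∈ Finset.univ.erase s, |B s t|) + d ≤ B s s := by
    intro s
    have hle : d ≤ 1 + γ * ∑ j ∈ Sᶜ.erase s.val, W s.val j :=
      ciInf_le (Finite.bddBelow_range _) s
    have herase : Sᶜ.erase s.val = Sᶜ :=
      Finset.erase_eq_of_notMem (by simp [s.property])
    rw [herase] at hle
    have habs : ∀ t ∈ Finset.univ.erase s, |B s t| = γ * W s.val t.val := by
      intro t ht
      have hne : t ≠ s := (Finset.mem_erase.mp ht).1
      have hvne : s.val ≠ t.val := fun h => hne (Subtype.ext h.symm)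
      rw [hBentry, hM, if_neg hvne, abs_neg, abs_of_nonneg (mul_nonneg hγ0 (hWpos _ _))]
    rw [Finset.sum_congr rfl habs, hBentry s s, hM, if_pos rfl]
    have h1 : ∑ j ∈ S.erase s.val, W s.val j + W s.val s.val = ∑ j ∈ S, W s.val j :=
      Finset.sum_erase_add _ _ s.property
    have h2 : ∑ j ∈ Finset.univ.erase s.val, W s.val j + W s.val s.val = ∑ j, W s.val j :=
      Finset.sum_erase_add _ _ (Finset.mem_univ s.val)
    have h3 : ∑ j ∈ S, W s.val j + ∑ j ∈ Sᶜ, W s.val j = ∑ j, W s.val j :=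
      Finset.sum_add_sum_compl S _
    have h4 : ∑ t ∈ (Finset.univ : Finset {x // x ∈ S}).erase s, (γ * W s.val t.val) +
        γ * W s.val s.val = ∑ j ∈ S, γ * W s.val j := by
      have h5 := Finset.sum_erase_add (Finset.univ : Finset {x // x ∈ S})
        (fun t : {x // x ∈ S} => γ * W s.val t.val) (Finset.mem_univ s)
      rw [Finset.univ_eq_attach, Finset.sum_attach S (fun j => γ * W s.val j)] at h5
      exact h5
    have h6 : ∑ j ∈ S, γ * W s.val j = γ * ∑ j ∈ S, W s.val j :=
      (Finset.mul_sum _ _ _).symm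
    have h7 : γ * ∑ j ∈ Finset.univ.erase s.val, W s.val j =
        γ * ∑ j, W s.val j - γ * W s.val s.val := by rw [← h2]; ring
    have h8 : γ * ∑ j, W s.val j = γ * ∑ j ∈ S, W s.val j + γ * ∑ j ∈ Sᶜ, W s.val j := by
      rw [← h3]; ring
    linarith
  have hdet : B.det ≠ 0 := varah_det_ne B d hd0 hdom
  refine ⟨isUnit_iff_ne_zero.mpr hdet, fun s => varah_inv_bound B d hd0 hdom s, ?_⟩
  rw [div_le_one hd0]
  exact hd1
end

section
/- Let M = I_K + γAᵀGᵀGA with q = 2, let C be any matrix with CᵀC = M, and suppose 0 ≤ γ and γ·K·‖W‖_max < 1/2. Then for every subset S ⊆ {1,…,K} and every vector w, the projection residual satisfies ‖C_{S^c}ᵀ (I − C_S(C_Sᵀ C_S)⁻¹C_Sᵀ) w‖_∞ ≤ (1 + K·γ·‖W‖_max)·‖Cᵀ w‖_∞ ≤ (3/2)·‖Cᵀ w‖_∞, where C_S (resp. C_{S^c}) is the submatrix of columns of C indexed by S (resp. its complement) and ‖·‖_∞ on vectors is the maximum absolute entry. -/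
open scoped Classical
open Matrix

lemma lap_psd (K : ℕ) (W : Fin K → Fin K → ℝ) :
    ((pairDiffMatrix K)ᵀ * (weightDiagSqrt K W)ᵀ * (weightDiagSqrt K W) *
      (pairDiffMatrix K)).PosSemidef := by
  have h := Matrix.posSemidef_conjTranspose_mul_self (weightDiagSqrt K W * pairDiffMatrix K)
  have he : (weightDiagSqrt K W * pairDiffMatrix K)ᴴ
      = (pairDiffMatrix K)ᵀ * (weightDiagSqrt K W)ᵀ := by
    rw [Matrix.conjTranspose_mul]
    congr 1 <;> ext i j <;> simp [Matrix.conjTranspose_apply]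
  rw [he, Matrix.mul_assoc] at h
  simpa [Matrix.mul_assoc] using h

lemma lap_symm (K : ℕ) (W : Fin K → Fin K → ℝ) :
    ((pairDiffMatrix K)ᵀ * (weightDiagSqrt K W)ᵀ * (weightDiagSqrt K W) *
      (pairDiffMatrix K))ᵀ
    = (pairDiffMatrix K)ᵀ * (weightDiagSqrt K W)ᵀ * (weightDiagSqrt K W) *
      (pairDiffMatrix K) := by
  have hD : (weightDiagSqrt K W)ᵀ = weightDiagSqrt K W := Matrix.diagonal_transpose _
  simp only [Matrix.transpose_mul, Matrix.transpose_transpose, hD, Matrix.mul_assoc]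

lemma lap_apply_lt (K : ℕ) (W : Fin K → Fin K → ℝ) (hWpos : ∀ k l, 0 ≤ W k l)
    {t l : Fin K} (h : t < l) :
    ((pairDiffMatrix K)ᵀ * (weightDiagSqrt K W)ᵀ * (weightDiagSqrt K W) *
      (pairDiffMatrix K)) t l = -(W t l) := by
  have hD : (weightDiagSqrt K W)ᵀ * weightDiagSqrt K W
      = Matrix.diagonal (fun p : {p : Fin K × Fin K // p.1 < p.2} => W p.val.1 p.val.2) := by
    rw [weightDiagSqrt, Matrix.diagonal_transpose, Matrix.diagonal_mul_diagonal,
      show (fun p : {p : Fin K × Fin K // p.1 < p.2} =>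
          Real.sqrt (W p.val.1 p.val.2) * Real.sqrt (W p.val.1 p.val.2))
        = fun p => W p.val.1 p.val.2 from funext fun p => Real.mul_self_sqrt (hWpos _ _)]
  have hre : (pairDiffMatrix K)ᵀ * (weightDiagSqrt K W)ᵀ * (weightDiagSqrt K W) *
      (pairDiffMatrix K)
      = (pairDiffMatrix K)ᵀ *
        Matrix.diagonal (fun p : {p : Fin K × Fin K // p.1 < p.2} => W p.val.1 p.val.2) *
        (pairDiffMatrix K) := by
    rw [Matrix.mul_assoc ((pairDiffMatrix K)ᵀ), hD]
  rw [hre]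
  have : ((pairDiffMatrix K)ᵀ *
        Matrix.diagonal (fun p : {p : Fin K × Fin K // p.1 < p.2} => W p.val.1 p.val.2) *
        (pairDiffMatrix K)) t l
      = ∑ p : {p : Fin K × Fin K // p.1 < p.2},
          (pairDiffMatrix K p t * W p.val.1 p.val.2) * pairDiffMatrix K p l := by
    rw [Matrix.mul_apply]
    simp only [Matrix.mul_diagonal, Matrix.transpose_apply]
  rw [this]
  rw [Finset.sum_eq_single (⟨(t, l), h⟩ : {p : Fin K × Fin K // p.1 < p.2})]
  · simp [pairDiffMatrix, h.ne, h.ne']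
  · rintro ⟨⟨a, b⟩, hab⟩ - hp
    simp only [pairDiffMatrix, Matrix.of_apply]
    by_cases h1 : t = a
    · by_cases h2 : l = b
      · exact absurd (by subst h1; subst h2; rfl) hp
      · have h3 : l ≠ a := fun e => absurd (h1 ▸ e : l = t) h.ne'
        simp [h2, h3]
    · by_cases h2 : t = b
      · have hla : l ≠ a := by
          rintro rfl
          exact absurd (hab.trans (h2 ▸ h)) (lt_irrefl l)
        have hlb : l ≠ b := fun e => h.ne (h2.trans e.symm)
        simp [hla, hlb]
      · simp [h1, h2]
  · intro hmem; exact absurd (Finset.mem_univ _) hmem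

lemma lap_apply_ne (K : ℕ) (W : Fin K → Fin K → ℝ) (hWsymm : ∀ k l, W k l = W l k)
    (hWpos : ∀ k l, 0 ≤ W k l) {t l : Fin K} (h : t ≠ l) :
    ((pairDiffMatrix K)ᵀ * (weightDiagSqrt K W)ᵀ * (weightDiagSqrt K W) *
      (pairDiffMatrix K)) t l = -(W t l) := by
  rcases h.lt_or_gt with h' | h'
  · exact lap_apply_lt K W hWpos h'
  · have h1 := lap_apply_lt K W hWpos h'
    have h2 := congrFun (congrFun (lap_symm K W) t) l
    rw [Matrix.transpose_apply] at h2
    rw [← h2, h1, hWsymm]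


set_option maxHeartbeats 1000000 in
/-- for `M = I + γAᵀGᵀGA` (q = 2), `CᵀC = M`, `0 ≤ γ` and `γK‖W‖_max < 1/2`,
the projection residual satisfies
`‖C_{Sᶜ}ᵀ(I − C_S(C_SᵀC_S)⁻¹C_Sᵀ)w‖_∞ ≤ (1 + Kγ‖W‖_max)‖Cᵀw‖_∞ ≤ (3/2)‖Cᵀw‖_∞`. -/
theorem projection_residual_bound
    (K : ℕ) (W : Fin K → Fin K → ℝ)
    (hWsymm : ∀ k l, W k l = W l k) (hWpos : ∀ k l, 0 ≤ W k l)
    (Wmax : ℝ) (hWmax : ∀ k l, |W k l| ≤ Wmax)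
    (γ : ℝ) (hγ0 : 0 ≤ γ) (hγ : γ * K * Wmax < 1 / 2)
    (m : Type) [Fintype m]
    (C : Matrix m (Fin K) ℝ)
    (hC : Cᵀ * C =
      1 + γ • ((pairDiffMatrix K)ᵀ * (weightDiagSqrt K W)ᵀ * (weightDiagSqrt K W) *
        (pairDiffMatrix K)))
    (S : Finset (Fin K)) (w : m → ℝ) :
    (∀ t : Fin K, t ∉ S →
      |∑ a : m, C a t *
          (w - (C.submatrix id (Subtype.val : {x // x ∈ S} → Fin K)) *ᵥ
            (((C.submatrix id (Subtype.val : {x // x ∈ S} → Fin K))ᵀ *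
                (C.submatrix id (Subtype.val : {x // x ∈ S} → Fin K)))⁻¹ *ᵥ
              ((C.submatrix id (Subtype.val : {x // x ∈ S} → Fin K))ᵀ *ᵥ w))) a| ≤
        (1 + K * γ * Wmax) * ⨆ k : Fin K, |(Cᵀ *ᵥ w) k|) ∧
    (1 + K * γ * Wmax) * (⨆ k : Fin K, |(Cᵀ *ᵥ w) k|) ≤
      (3 / 2) * ⨆ k : Fin K, |(Cᵀ *ᵥ w) k| := by
  set L := (pairDiffMatrix K)ᵀ * (weightDiagSqrt K W)ᵀ * (weightDiagSqrt K W) *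
    (pairDiffMatrix K) with hLdef
  set u : Fin K → ℝ := Cᵀ *ᵥ w with hu
  set U : ℝ := ⨆ k : Fin K, |u k| with hUdef
  have hU0 : 0 ≤ U := Real.iSup_nonneg fun k => abs_nonneg _
  have hUle : ∀ k, |u k| ≤ U := fun k => le_ciSup (f := fun k => |u k|) (Finite.bddAbove_range _) k
  constructor
  · intro t ht
    have hWmax0 : 0 ≤ Wmax := (abs_nonneg _).trans (hWmax t t)
    set B := C.submatrix id (Subtype.val : {x // x ∈ S} → Fin K) with hB
    set N := Bᵀ * B with hN
    set v := N⁻¹ *ᵥ (Bᵀ *ᵥ w) with hv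
    have hNM : N = (Cᵀ * C).submatrix (Subtype.val : {x // x ∈ S} → Fin K) Subtype.val := by
      ext i j
      simp [hN, hB, Matrix.mul_apply, Matrix.submatrix_apply, Matrix.transpose_apply]
    have hN1 : N = 1 + γ • L.submatrix (Subtype.val : {x // x ∈ S} → Fin K) Subtype.val := by
      rw [hNM, hC]
      ext i j
      simp only [Matrix.submatrix_apply, Matrix.add_apply, Matrix.smul_apply, Matrix.one_apply,
        Subtype.ext_iff]
    have hLsub : (L.submatrix (Subtype.val : {x // x ∈ S} → Fin K) Subtype.val).PosSemidef := by
      rw [hLdef]; exact (lap_psd K W).submatrix _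
    have hQuad : ∀ x : {x // x ∈ S} → ℝ, ∑ i, x i ^ 2 ≤ x ⬝ᵥ (N *ᵥ x) := by
      intro x
      have hx : 0 ≤ x ⬝ᵥ (L.submatrix (Subtype.val : {x // x ∈ S} → Fin K) Subtype.val *ᵥ x) := by
        simpa using hLsub.dotProduct_mulVec_nonneg x
      rw [hN1, Matrix.add_mulVec, dotProduct_add, Matrix.one_mulVec,
        Matrix.smul_mulVec, dotProduct_smul, smul_eq_mul]
      have h2 : x ⬝ᵥ x = ∑ i, x i ^ 2 := by simp [dotProduct, sq]
      nlinarith [mul_nonneg hγ0 hx]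
    have hNH : N.IsHermitian := by
      have hBH : Bᴴ = Bᵀ := by ext i j; simp [Matrix.conjTranspose_apply]
      have h := Matrix.isHermitian_conjTranspose_mul_self B
      rwa [hBH] at h
    have hPD : N.PosDef := by
      refine Matrix.PosDef.of_dotProduct_mulVec_pos hNH fun x hx => ?_
      have hx0 : 0 < ∑ i, x i ^ 2 := by
        obtain ⟨i, hi⟩ := Function.ne_iff.mp hx
        exact Finset.sum_pos' (fun j _ => sq_nonneg _) ⟨i, Finset.mem_univ i, (sq_nonneg _).lt_of_ne (Ne.symm (pow_ne_zero 2 hi))⟩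
      have h := lt_of_lt_of_le hx0 (hQuad x)
      simpa using h
    have hdet : IsUnit N.det := isUnit_iff_ne_zero.mpr hPD.det_pos.ne'
    have hNv : N *ᵥ v = Bᵀ *ᵥ w := by
      rw [hv, Matrix.mulVec_mulVec, Matrix.mul_nonsing_inv _ hdet, Matrix.one_mulVec]
    have huS : ∀ l : {x // x ∈ S}, (Bᵀ *ᵥ w) l = u l.val := by
      intro l
      simp [hB, hu, Matrix.mulVec, dotProduct, Matrix.transpose_apply,
        Matrix.submatrix_apply]
    have hcard : (S.card : ℝ) ≤ K := by
      exact_mod_cast (Finset.card_le_univ S).trans_eq (by simp)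
    have hsu : ∑ i : {x // x ∈ S}, u i.val ^ 2 ≤ (K : ℝ) * U ^ 2 := by
      calc ∑ i : {x // x ∈ S}, u i.val ^ 2 ≤ ∑ _i : {x // x ∈ S}, U ^ 2 := by
            refine Finset.sum_le_sum fun i _ => ?_
            have h := hUle i.val
            calc u i.val ^ 2 = |u i.val| ^ 2 := (sq_abs _).symm
              _ ≤ U ^ 2 := by nlinarith [abs_nonneg (u i.val)]
        _ = (S.card : ℝ) * U ^ 2 := by
            rw [Finset.sum_const]
            simp [Finset.card_univ, Fintype.card_coe, nsmul_eq_mul]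
        _ ≤ (K : ℝ) * U ^ 2 := by nlinarith [sq_nonneg U]
    have hsv0 : 0 ≤ ∑ i : {x // x ∈ S}, v i ^ 2 := Finset.sum_nonneg fun i _ => sq_nonneg _
    have hsu0 : 0 ≤ ∑ i : {x // x ∈ S}, u i.val ^ 2 :=
      Finset.sum_nonneg fun i _ => sq_nonneg _
    have hquadv : ∑ i : {x // x ∈ S}, v i ^ 2 ≤ ∑ i : {x // x ∈ S}, v i * u i.val := by
      have h1 := hQuad v
      have h2 : v ⬝ᵥ (N *ᵥ v) = ∑ i : {x // x ∈ S}, v i * u i.val := by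
        rw [hNv]
        simp only [dotProduct]
        exact Finset.sum_congr rfl fun i _ => by rw [huS]
      rw [h2] at h1
      exact h1
    have hcs := Finset.sum_mul_sq_le_sq_mul_sq Finset.univ v
      (fun i : {x // x ∈ S} => u i.val)
    have hsv_le : ∑ i : {x // x ∈ S}, v i ^ 2 ≤ ∑ i : {x // x ∈ S}, u i.val ^ 2 := by
      nlinarith [hquadv, hcs, hsv0, hsu0]
    have hsvK : ∑ i : {x // x ∈ S}, v i ^ 2 ≤ (K : ℝ) * U ^ 2 := hsv_le.trans hsu
    have hw2 : ∑ i : {x // x ∈ S}, W t i.val ^ 2 ≤ (K : ℝ) * Wmax ^ 2 := by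
      calc ∑ i : {x // x ∈ S}, W t i.val ^ 2 ≤ ∑ _i : {x // x ∈ S}, Wmax ^ 2 := by
            refine Finset.sum_le_sum fun i _ => ?_
            have h := hWmax t i.val
            calc W t i.val ^ 2 = |W t i.val| ^ 2 := (sq_abs _).symm
              _ ≤ Wmax ^ 2 := by nlinarith [abs_nonneg (W t i.val)]
        _ = (S.card : ℝ) * Wmax ^ 2 := by
            rw [Finset.sum_const]
            simp [Finset.card_univ, Fintype.card_coe, nsmul_eq_mul]
        _ ≤ (K : ℝ) * Wmax ^ 2 := by nlinarith [sq_nonneg Wmax]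
    have hSsum : |∑ i : {x // x ∈ S}, W t i.val * v i| ≤ (K : ℝ) * Wmax * U := by
      have hcs2 := Finset.sum_mul_sq_le_sq_mul_sq Finset.univ
        (fun i : {x // x ∈ S} => W t i.val) v
      have hw20 : 0 ≤ ∑ i : {x // x ∈ S}, W t i.val ^ 2 :=
        Finset.sum_nonneg fun i _ => sq_nonneg _
      have hb : (∑ i : {x // x ∈ S}, W t i.val * v i) ^ 2 ≤ ((K : ℝ) * Wmax * U) ^ 2 := by
        have hmul := mul_le_mul hw2 hsvK hsv0 (by positivity)
        calc (∑ i : {x // x ∈ S}, W t i.val * v i) ^ 2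
            ≤ (∑ i : {x // x ∈ S}, W t i.val ^ 2) * ∑ i : {x // x ∈ S}, v i ^ 2 := hcs2
          _ ≤ ((K : ℝ) * Wmax ^ 2) * ((K : ℝ) * U ^ 2) := hmul
          _ = ((K : ℝ) * Wmax * U) ^ 2 := by ring
      have h := Real.sqrt_le_sqrt hb
      rwa [Real.sqrt_sq_eq_abs, Real.sqrt_sq (mul_nonneg (mul_nonneg (Nat.cast_nonneg K) hWmax0) hU0)] at h
    have hres : ∑ a : m, C a t * (w - B *ᵥ v) a
        = u t + γ * ∑ i : {x // x ∈ S}, W t i.val * v i := by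
      calc ∑ a : m, C a t * (w - B *ᵥ v) a
          = ∑ a : m, (C a t * w a - ∑ i : {x // x ∈ S}, C a t * C a i.val * v i) := by
            refine Finset.sum_congr rfl fun a _ => ?_
            simp [hB, Matrix.mulVec, dotProduct, mul_sub, Finset.mul_sum,
              Matrix.submatrix_apply, mul_assoc]
        _ = (∑ a : m, C a t * w a)
            - ∑ a : m, ∑ i : {x // x ∈ S}, C a t * C a i.val * v i :=
            Finset.sum_sub_distrib _ _
        _ = u t - ∑ i : {x // x ∈ S}, (∑ a : m, C a t * C a i.val) * v i := by
            rw [Finset.sum_comm]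
            have hg1 : ∑ a : m, C a t * w a = u t := by
              simp [hu, Matrix.mulVec, dotProduct, Matrix.transpose_apply]
            have hg2 : ∑ i : {x // x ∈ S}, ∑ a : m, C a t * C a i.val * v i
                = ∑ i : {x // x ∈ S}, (∑ a : m, C a t * C a i.val) * v i :=
              Finset.sum_congr rfl fun i _ => (Finset.sum_mul _ _ _).symm
            rw [hg1, hg2]
        _ = u t + γ * ∑ i : {x // x ∈ S}, W t i.val * v i := by
            have hent : ∀ i : {x // x ∈ S},
                (∑ a : m, C a t * C a i.val) = γ * -(W t i.val) := by
              intro i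
              have h1 : (Cᵀ * C) t i.val = ∑ a : m, C a t * C a i.val := by
                simp [Matrix.mul_apply, Matrix.transpose_apply]
              have htne : t ≠ i.val := fun e => ht (e ▸ i.2)
              rw [← h1, hC]
              simp [Matrix.add_apply, Matrix.one_apply, htne, Matrix.smul_apply, hLdef,
                lap_apply_ne K W hWsymm hWpos htne]
            rw [Finset.sum_congr rfl fun i _ => by rw [hent i]]
            have hx : ∑ i : {x // x ∈ S}, γ * -(W t i.val) * v i
                = -(γ * ∑ i : {x // x ∈ S}, W t i.val * v i) := by
              rw [Finset.mul_sum, ← Finset.sum_neg_distrib]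
              exact Finset.sum_congr rfl fun i _ => by ring
            rw [hx]
            ring
    rw [hres]
    calc |u t + γ * ∑ i : {x // x ∈ S}, W t i.val * v i|
        ≤ |u t| + |γ * ∑ i : {x // x ∈ S}, W t i.val * v i| := abs_add_le _ _
      _ ≤ U + γ * ((K : ℝ) * Wmax * U) := by
          have h := mul_le_mul_of_nonneg_left hSsum hγ0
          rw [abs_mul, abs_of_nonneg hγ0]
          exact add_le_add (hUle t) h
      _ = (1 + (K : ℝ) * γ * Wmax) * U := by ring
  · have h1 : (1 + (K : ℝ) * γ * Wmax) ≤ 3 / 2 := by nlinarith [hγ]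
    have h2 := mul_le_mul_of_nonneg_right h1 hU0
    linarith
end
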